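/- arXiv:1412.2196 — 8 statements merged into one kernel-verified Lean document; each statement's English description precedes it below -/
import Mathlib

section
/- If Z satisfies A = AZ, then ‖Z‖_* ≥ rank(A), and equality holds for Z = A†A; i.e., the minimum nuclear norm over the constraint set {Z : A = AZ} equals rank(A). -/
open Matrix

def IsMoorePenrose {m n : ℕ} (A : Matrix (Fin m) (Fin n) ℝ) (B : Matrix (Fin n) (Fin m) ℝ) : Prop :=
  A * B * A = A ∧ B * A * B = B ∧ (A * B)ᵀ = A * B ∧ (B * A)ᵀ = B * A

noncomputable def nuclearNorm {p q : ℕ} (M : Matrix (Fin p) (Fin q) ℝ) : ℝ :=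
  ∑ i, Real.sqrt ((Matrix.isHermitian_conjTranspose_mul_self M).eigenvalues i)

/- Auxiliary lemmas -/

lemma aux_dot_cs {k : ℕ} (x y : Fin k → ℝ) :
    x ⬝ᵥ y ≤ Real.sqrt (x ⬝ᵥ x) * Real.sqrt (y ⬝ᵥ y) := by
  have h1 : ∀ a b : Fin k → ℝ, a ⬝ᵥ b =
      (inner ℝ ((WithLp.equiv 2 (Fin k → ℝ)).symm a) ((WithLp.equiv 2 (Fin k → ℝ)).symm b) : ℝ) := by
    intro a b
    simp [dotProduct, PiLp.inner_apply, RCLike.inner_apply, mul_comm]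
  rw [h1, h1, h1]
  set a := (WithLp.equiv 2 (Fin k → ℝ)).symm x
  set b := (WithLp.equiv 2 (Fin k → ℝ)).symm y
  rw [real_inner_self_eq_norm_mul_norm, real_inner_self_eq_norm_mul_norm,
    Real.sqrt_mul_self (norm_nonneg _), Real.sqrt_mul_self (norm_nonneg _)]
  exact real_inner_le_norm a b

lemma aux_dot_self_nonneg {k : ℕ} (x : Fin k → ℝ) : 0 ≤ x ⬝ᵥ x :=
  Finset.sum_nonneg fun _ _ => mul_self_nonneg _

lemma aux_trace_eq_sum_dot {k : ℕ} {N : Matrix (Fin k) (Fin k) ℝ} (hN : N.IsHermitian)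
    (M : Matrix (Fin k) (Fin k) ℝ) :
    M.trace = ∑ i, (hN.eigenvectorBasis i : Fin k → ℝ) ⬝ᵥ
      (M *ᵥ (hN.eigenvectorBasis i : Fin k → ℝ)) := by
  have hU : (hN.eigenvectorUnitary : Matrix (Fin k) (Fin k) ℝ) *
      star (hN.eigenvectorUnitary : Matrix (Fin k) (Fin k) ℝ) = 1 :=
    Matrix.mem_unitaryGroup_iff.mp hN.eigenvectorUnitary.2
  have h : M.trace = (star (hN.eigenvectorUnitary : Matrix (Fin k) (Fin k) ℝ) * M *
      (hN.eigenvectorUnitary : Matrix (Fin k) (Fin k) ℝ)).trace := by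
    rw [Matrix.trace_mul_cycle, hU, Matrix.one_mul]
  rw [h, Matrix.trace]
  refine Finset.sum_congr rfl fun i _ => ?_
  simp only [Matrix.diag_apply, Matrix.mul_apply, Matrix.star_apply, Matrix.mulVec, dotProduct,
    IsHermitian.eigenvectorUnitary_apply, star_trivial, Finset.sum_mul, Finset.mul_sum]
  rw [Finset.sum_comm]
  exact Finset.sum_congr rfl fun j _ => Finset.sum_congr rfl fun l _ => by ring

lemma aux_trace_eq_sum_eig {k : ℕ} {N : Matrix (Fin k) (Fin k) ℝ} (hN : N.IsHermitian) :
    N.trace = ∑ i, hN.eigenvalues i := by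
  conv_lhs => rw [hN.spectral_theorem]
  rw [Unitary.conjStarAlgAut_apply, Matrix.trace_mul_cycle, Unitary.coe_star_mul_self, Matrix.one_mul]
  simp [Matrix.trace_diagonal]

lemma aux_eig_congr {k : ℕ} {M N : Matrix (Fin k) (Fin k) ℝ} (h : M = N)
    (hM : M.IsHermitian) (hN : N.IsHermitian) : hM.eigenvalues = hN.eigenvalues := by
  subst h; rfl

lemma aux_eig01 {k : ℕ} {P : Matrix (Fin k) (Fin k) ℝ} (hPP : P * P = P) {v : Fin k → ℝ} {μ : ℝ}
    (hv : P *ᵥ v = μ • v) (hvne : v ≠ 0) : μ = 0 ∨ μ = 1 := by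
  have h2 : P *ᵥ (P *ᵥ v) = (μ * μ) • v := by rw [hv, Matrix.mulVec_smul, hv, smul_smul]
  have h3 : P *ᵥ (P *ᵥ v) = μ • v := by rw [Matrix.mulVec_mulVec, hPP, hv]
  have h4 : (μ * μ - μ) • v = 0 := by rw [sub_smul, ← h2, h3, sub_self]
  rcases smul_eq_zero.mp h4 with h | h
  · have : μ * (μ - 1) = 0 := by ring_nf; ring_nf at h; linarith
    rcases mul_eq_zero.mp this with h' | h'
    · exact Or.inl h'
    · exact Or.inr (by linarith)
  · exact absurd h hvne

lemma aux_idem_eig {k : ℕ} {P : Matrix (Fin k) (Fin k) ℝ} (hP : P.IsHermitian)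
    (hPP : P * P = P) (i : Fin k) : hP.eigenvalues i = 0 ∨ hP.eigenvalues i = 1 :=
  aux_eig01 hPP (hP.mulVec_eigenvectorBasis i)
    (by simpa using hP.eigenvectorBasis.orthonormal.ne_zero i)

lemma aux_idem_trace_eq_rank {k : ℕ} {P : Matrix (Fin k) (Fin k) ℝ} (hP : P.IsHermitian)
    (hPP : P * P = P) : P.trace = (P.rank : ℝ) := by
  rw [aux_trace_eq_sum_eig hP, hP.rank_eq_card_non_zero_eigs]
  rw [Fintype.card_subtype]
  rw [← Finset.sum_boole]
  refine Finset.sum_congr rfl fun i _ => ?_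
  rcases aux_idem_eig hP hPP i with h | h <;> simp [h]

lemma aux_basis_dot_one {k : ℕ} {N : Matrix (Fin k) (Fin k) ℝ} (hN : N.IsHermitian) (i : Fin k) :
    (hN.eigenvectorBasis i : Fin k → ℝ) ⬝ᵥ (hN.eigenvectorBasis i : Fin k → ℝ) = 1 := by
  have h := hN.eigenvectorBasis.orthonormal.1 i
  have h2 : (inner ℝ (hN.eigenvectorBasis i) (hN.eigenvectorBasis i) : ℝ) = 1 := by
    rw [real_inner_self_eq_norm_mul_norm, h]; norm_num
  rw [← h2]
  simp only [dotProduct, PiLp.inner_apply, RCLike.inner_apply, conj_trivial, mul_comm]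

lemma aux_term_bound {k : ℕ} {P Z : Matrix (Fin k) (Fin k) ℝ} (hPt : Pᵀ = P) (hPP : P * P = P)
    {v : Fin k → ℝ} {μ : ℝ} (hv : (Zᴴ * Z) *ᵥ v = μ • v) (hv1 : v ⬝ᵥ v = 1) :
    v ⬝ᵥ ((P * Z) *ᵥ v) ≤ Real.sqrt μ := by
  have hct : Zᴴ = Zᵀ := by ext i j; simp
  set w := Z *ᵥ v with hw
  have hvmP : v ᵥ* P = P *ᵥ v := by rw [← Matrix.mulVec_transpose, hPt]
  have step1 : v ⬝ᵥ ((P * Z) *ᵥ v) = (P *ᵥ v) ⬝ᵥ w := by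
    rw [← Matrix.mulVec_mulVec, Matrix.dotProduct_mulVec, hvmP]
  have hww : w ⬝ᵥ w = μ := by
    rw [hw, Matrix.dotProduct_mulVec, ← Matrix.mulVec_transpose, ← hw,
      Matrix.mulVec_mulVec, ← hct, hv, smul_dotProduct, hv1, smul_eq_mul, mul_one]
  have hPvP : (P *ᵥ v) ᵥ* P = P *ᵥ v := by
    rw [← Matrix.mulVec_transpose, hPt, Matrix.mulVec_mulVec, hPP]
  have hc : (P *ᵥ v) ⬝ᵥ (P *ᵥ v) = (P *ᵥ v) ⬝ᵥ v := by
    conv_lhs => rw [Matrix.dotProduct_mulVec, hPvP]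
  have hc0 : 0 ≤ (P *ᵥ v) ⬝ᵥ (P *ᵥ v) := aux_dot_self_nonneg _
  have hcs := aux_dot_cs (P *ᵥ v) v
  rw [hv1, Real.sqrt_one, mul_one] at hcs
  have hle : (P *ᵥ v) ⬝ᵥ (P *ᵥ v) ≤ Real.sqrt ((P *ᵥ v) ⬝ᵥ (P *ᵥ v)) := by
    calc (P *ᵥ v) ⬝ᵥ (P *ᵥ v) = (P *ᵥ v) ⬝ᵥ v := hc
      _ ≤ Real.sqrt ((P *ᵥ v) ⬝ᵥ (P *ᵥ v)) := hcs
  have hc1 : (P *ᵥ v) ⬝ᵥ (P *ᵥ v) ≤ 1 := by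
    nlinarith [Real.sq_sqrt hc0, Real.sqrt_nonneg ((P *ᵥ v) ⬝ᵥ (P *ᵥ v)), hle]
  have hsq : Real.sqrt ((P *ᵥ v) ⬝ᵥ (P *ᵥ v)) ≤ 1 := by
    rw [show (1 : ℝ) = Real.sqrt 1 by rw [Real.sqrt_one]]
    exact Real.sqrt_le_sqrt hc1
  calc v ⬝ᵥ ((P * Z) *ᵥ v) = (P *ᵥ v) ⬝ᵥ w := step1
    _ ≤ Real.sqrt ((P *ᵥ v) ⬝ᵥ (P *ᵥ v)) * Real.sqrt (w ⬝ᵥ w) := aux_dot_cs _ _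
    _ ≤ 1 * Real.sqrt (w ⬝ᵥ w) :=
        mul_le_mul_of_nonneg_right hsq (Real.sqrt_nonneg _)
    _ = Real.sqrt μ := by rw [one_mul, hww]

lemma aux_trace_le_nuclear {k : ℕ} (P Z : Matrix (Fin k) (Fin k) ℝ) (hPt : Pᵀ = P)
    (hPP : P * P = P) : (P * Z).trace ≤ nuclearNorm Z := by
  have h := Matrix.isHermitian_conjTranspose_mul_self Z
  rw [aux_trace_eq_sum_dot h (P * Z), nuclearNorm]
  refine Finset.sum_le_sum fun i _ => ?_
  exact aux_term_bound hPt hPP (h.mulVec_eigenvectorBasis i) (aux_basis_dot_one h i)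

theorem stmt_6 {m n : ℕ} (A : Matrix (Fin m) (Fin n) ℝ) (B : Matrix (Fin n) (Fin m) ℝ)
    (hB : IsMoorePenrose A B) :
    (∀ Z : Matrix (Fin n) (Fin n) ℝ, A = A * Z → (A.rank : ℝ) ≤ nuclearNorm Z) ∧
    A = A * (B * A) ∧ nuclearNorm (B * A) = A.rank := by
  obtain ⟨h1, h2, _h3, h4⟩ := hB
  have hPt : (B * A)ᵀ = B * A := h4
  have hPP : (B * A) * (B * A) = B * A := by
    rw [← Matrix.mul_assoc, h2]
  have hP : (B * A).IsHermitian := by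
    have : (B * A)ᴴ = (B * A)ᵀ := by ext i j; simp
    rw [Matrix.IsHermitian, this, hPt]
  have hA2 : A = A * (B * A) := by rw [← Matrix.mul_assoc, h1]
  have hrank : A.rank = (B * A).rank := by
    refine le_antisymm ?_ (Matrix.rank_mul_le_right B A)
    conv_lhs => rw [hA2]
    exact Matrix.rank_mul_le_right A (B * A)
  have htrace : (B * A).trace = (A.rank : ℝ) := by
    rw [aux_idem_trace_eq_rank hP hPP, hrank]
  refine ⟨?_, hA2, ?_⟩
  · intro Z hZ
    have hPZ : (B * A) * Z = B * A := by rw [Matrix.mul_assoc, ← hZ]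
    calc (A.rank : ℝ) = (B * A).trace := htrace.symm
      _ = ((B * A) * Z).trace := by rw [hPZ]
      _ ≤ nuclearNorm Z := aux_trace_le_nuclear (B * A) Z hPt hPP
  · have he : (B * A)ᴴ * (B * A) = B * A := by
      have : (B * A)ᴴ = (B * A)ᵀ := by ext i j; simp
      rw [this, hPt, hPP]
    rw [nuclearNorm, aux_eig_congr he (Matrix.isHermitian_conjTranspose_mul_self (B * A)) hP]
    rw [← htrace, aux_trace_eq_sum_eig hP]
    refine Finset.sum_congr rfl fun i _ => ?_
    rcases aux_idem_eig hP hPP i with h | h <;> simp [h]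
end

section
/- Let A = UΣVᵀ be the skinny SVD of A. Then for any matrix S with VᵀS = 0, the matrix Z = A†A + SVᵀ satisfies A = AZ and rank(Z) = rank(A); hence every such Z is an optimal solution of min_Z rank(Z) subject to A = AZ. -/
open Matrix

theorem stmt_7 {m n r : ℕ} (A : Matrix (Fin m) (Fin n) ℝ) (B : Matrix (Fin n) (Fin m) ℝ)
    (U : Matrix (Fin m) (Fin r) ℝ) (V : Matrix (Fin n) (Fin r) ℝ) (S : Matrix (Fin r) (Fin r) ℝ)
    (hU : Uᵀ * U = 1) (hV : Vᵀ * V = 1)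
    (hS : ∃ d : Fin r → ℝ, S = Matrix.diagonal d ∧ ∀ i, 0 < d i)
    (hA : A = U * S * Vᵀ) (hB : IsMoorePenrose A B)
    (T : Matrix (Fin n) (Fin r) ℝ) (hT : Vᵀ * T = 0) :
    A = A * (B * A + T * Vᵀ) ∧ (B * A + T * Vᵀ).rank = A.rank ∧
    ∀ Z : Matrix (Fin n) (Fin n) ℝ, A = A * Z → (B * A + T * Vᵀ).rank ≤ Z.rank := by
  obtain ⟨hABA, hBAB, h3, h4⟩ := hB
  obtain ⟨d, hSd, hdpos⟩ := hS
  have hAT : A * T = 0 := by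
    rw [hA, Matrix.mul_assoc, hT, Matrix.mul_zero]
  have h1 : A = A * (B * A + T * Vᵀ) := by
    rw [Matrix.mul_add, ← Matrix.mul_assoc, hABA, ← Matrix.mul_assoc, hAT, Matrix.zero_mul,
      add_zero]
  -- rank S = r
  have hSrank : S.rank = r := by
    have hu : IsUnit S := by
      rw [hSd]
      apply (Matrix.isUnit_iff_isUnit_det _).mpr
      rw [Matrix.det_diagonal]
      exact isUnit_iff_ne_zero.mpr (Finset.prod_pos (fun i _ => hdpos i)).ne'
    simpa using Matrix.rank_of_isUnit S hu

  have hUAV : Uᵀ * A * V = S := by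
    rw [hA, ← Matrix.mul_assoc, ← Matrix.mul_assoc, hU, Matrix.one_mul, Matrix.mul_assoc, hV,
      Matrix.mul_one]
  have hrA_ge : r ≤ A.rank := by
    calc r = S.rank := hSrank.symm
    _ = (Uᵀ * A * V).rank := by rw [hUAV]
    _ ≤ (Uᵀ * A).rank := Matrix.rank_mul_le_left _ _
    _ ≤ A.rank := Matrix.rank_mul_le_right _ _
  have hVr : (Vᵀ).rank ≤ r := by
    simpa using Matrix.rank_le_card_height Vᵀ
  have hrA_le : A.rank ≤ r := by
    calc A.rank = ((U * S) * Vᵀ).rank := by rw [← hA]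
    _ ≤ (Vᵀ).rank := Matrix.rank_mul_le_right _ _
    _ ≤ r := hVr
  have hrA : A.rank = r := le_antisymm hrA_le hrA_ge
  have hZfac : B * A + T * Vᵀ = (B * (U * S) + T) * Vᵀ := by
    rw [Matrix.add_mul, hA]
    simp only [Matrix.mul_assoc]
  have hZle : (B * A + T * Vᵀ).rank ≤ A.rank := by
    rw [hZfac, hrA]
    exact le_trans (Matrix.rank_mul_le_right _ _) hVr
  have hZge : A.rank ≤ (B * A + T * Vᵀ).rank := by
    calc A.rank = (A * (B * A + T * Vᵀ)).rank := by rw [← h1]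
    _ ≤ _ := Matrix.rank_mul_le_right _ _
  have h2 : (B * A + T * Vᵀ).rank = A.rank := le_antisymm hZle hZge
  refine ⟨h1, h2, fun Z hZ => ?_⟩
  calc (B * A + T * Vᵀ).rank = A.rank := h2
  _ = (A * Z).rank := by rw [← hZ]
  _ ≤ Z.rank := Matrix.rank_mul_le_right _ _
end

section
/- Conversely, every matrix Z satisfying A = AZ and rank(Z) = rank(A) has the form Z = A†A + SVᵀ for some matrix S with VᵀS = 0, where A = UΣVᵀ is the skinny SVD of A. -/
open Matrix

theorem stmt_8 {m n r : ℕ} (A : Matrix (Fin m) (Fin n) ℝ) (B : Matrix (Fin n) (Fin m) ℝ)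
    (U : Matrix (Fin m) (Fin r) ℝ) (V : Matrix (Fin n) (Fin r) ℝ) (S : Matrix (Fin r) (Fin r) ℝ)
    (hU : Uᵀ * U = 1) (hV : Vᵀ * V = 1)
    (hS : ∃ d : Fin r → ℝ, S = Matrix.diagonal d ∧ ∀ i, 0 < d i)
    (hA : A = U * S * Vᵀ) (hB : IsMoorePenrose A B)
    (Z : Matrix (Fin n) (Fin n) ℝ) (hZ : A = A * Z) (hrk : Z.rank = A.rank) :
    ∃ T : Matrix (Fin n) (Fin r) ℝ, Vᵀ * T = 0 ∧ Z = B * A + T * Vᵀ := by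
  obtain ⟨hB1, hB2, hB3, hB4⟩ := hB
  obtain ⟨d, hSd, hdpos⟩ := hS
  set Si : Matrix (Fin r) (Fin r) ℝ := Matrix.diagonal (fun i => (d i)⁻¹) with hSi
  have hSiS : Si * S = 1 := by
    rw [hSd, hSi, Matrix.diagonal_mul_diagonal,
      show (fun i => (d i)⁻¹ * d i) = fun _ => (1:ℝ) from
        funext fun i => inv_mul_cancel₀ (hdpos i).ne', Matrix.diagonal_one]
  -- V^T = Si * U^T * A
  have hVt : Vᵀ = Si * Uᵀ * A := by
    rw [hA, Matrix.mul_assoc U S Vᵀ, Matrix.mul_assoc Si Uᵀ, ← Matrix.mul_assoc Uᵀ U, hU,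
      Matrix.one_mul, ← Matrix.mul_assoc Si S, hSiS, Matrix.one_mul]
  have hVtZ : Vᵀ * Z = Vᵀ := by
    rw [hVt, Matrix.mul_assoc (Si * Uᵀ) A Z, ← hZ]
  have hZtV : Zᵀ * V = V := by
    have := congrArg Matrix.transpose hVtZ
    simpa [Matrix.transpose_mul] using this
  have hrankV : V.rank = r := by
    have h1 : V.rank ≤ r := by simpa using V.rank_le_card_width
    have h2 : r ≤ V.rank := by
      have := Matrix.rank_mul_le_right Vᵀ V
      rw [hV] at this
      simpa using this
    omega
  have hrankA : A.rank = r := by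
    have h1 : A.rank ≤ Vᵀ.rank := by
      rw [hA]; exact Matrix.rank_mul_le_right _ _
    have h2 : Vᵀ.rank ≤ A.rank := by
      rw [hVt]; exact Matrix.rank_mul_le_right _ _
    have h3 : Vᵀ.rank = r := by rw [Matrix.rank_transpose]; exact hrankV
    omega
  have hle : LinearMap.range V.mulVecLin ≤ LinearMap.range Zᵀ.mulVecLin := by
    rw [← hZtV, Matrix.mulVecLin_mul]
    exact LinearMap.range_comp_le_range _ _
  have hfr : Module.finrank ℝ (LinearMap.range V.mulVecLin)
      = Module.finrank ℝ (LinearMap.range Zᵀ.mulVecLin) := by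
    change V.rank = Zᵀ.rank
    rw [Matrix.rank_transpose, hrk, hrankA, hrankV]
  have hrange : LinearMap.range Zᵀ.mulVecLin = LinearMap.range V.mulVecLin :=
    (Submodule.eq_of_le_of_finrank_eq hle hfr).symm
  have hcol : ∀ i : Fin n, ∃ c : Fin r → ℝ, V.mulVec c = fun j => Z i j := by
    intro i
    have hmem : Zᵀ.mulVec (Pi.single i 1) ∈ LinearMap.range V.mulVecLin := by
      rw [← hrange]; exact ⟨Pi.single i 1, rfl⟩
    obtain ⟨c, hc⟩ := hmem
    refine ⟨c, ?_⟩
    rw [Matrix.mulVecLin_apply] at hc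
    rw [hc]
    funext j
    simp [Matrix.mulVec_single]
  choose c hc using hcol
  set C : Matrix (Fin n) (Fin r) ℝ := Matrix.of c with hC
  have hCV : C * Vᵀ = Z := by
    funext i j
    have := congrFun (hc i) j
    simp only [Matrix.mulVec, dotProduct] at this
    simp only [Matrix.mul_apply, Matrix.transpose_apply, hC, Matrix.of_apply]
    rw [← this]
    exact Finset.sum_congr rfl fun k _ => mul_comm _ _
  have hVtC : Vᵀ * C = 1 := by
    have h1 : Vᵀ * C * (Vᵀ * V) = Vᵀ * V := by
      rw [← Matrix.mul_assoc (Vᵀ * C) Vᵀ V, Matrix.mul_assoc Vᵀ C Vᵀ, hCV, hVtZ]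
    rwa [hV, Matrix.mul_one] at h1
  have hP : B * A = V * (S * (Uᵀ * Bᵀ)) := by
    rw [← hB4, hA, Matrix.transpose_mul, Matrix.transpose_mul, Matrix.transpose_mul,
      Matrix.transpose_transpose, show Sᵀ = S by rw [hSd]; exact Matrix.diagonal_transpose d,
      Matrix.mul_assoc, Matrix.mul_assoc]
  have hBA : B * A = V * Vᵀ := by
    have hAP : A * (B * A) = A := by rw [← Matrix.mul_assoc]; exact hB1
    have hVtP : Vᵀ * (B * A) = Vᵀ := by
      rw [hVt, Matrix.mul_assoc (Si * Uᵀ) A (B * A), hAP]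
    rw [hP, ← Matrix.mul_assoc, hV, Matrix.one_mul] at hVtP
    rw [hP, hVtP]
  refine ⟨C - V, ?_, ?_⟩
  · rw [Matrix.mul_sub, hVtC, hV, sub_self]
  · rw [hBA, Matrix.sub_mul, ← hCV]
    abel
end

section
/- The unique minimizer of ‖Z‖_* subject to A = AZ is Z* = VVᵀ = A†A, where A = UΣVᵀ is the skinny SVD of A; that is, any Z with A = AZ and ‖Z‖_* = rank(A) must equal A†A. -/
open Matrix

noncomputable def Matrix.PosSemidef.sqrt {k : ℕ} {M : Matrix (Fin k) (Fin k) ℝ}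
    (hM : M.PosSemidef) : Matrix (Fin k) (Fin k) ℝ :=
  hM.1.cfc Real.sqrt

lemma Matrix.PosSemidef.posSemidef_sqrt {k : ℕ} {M : Matrix (Fin k) (Fin k) ℝ}
    (hM : M.PosSemidef) : hM.sqrt.PosSemidef := by
  rw [Matrix.PosSemidef.sqrt, IsHermitian.cfc, Unitary.conjStarAlgAut_apply,
    Unitary.isUnit_coe.posSemidef_star_right_conjugate_iff, posSemidef_diagonal_iff]
  intro i
  simp [Real.sqrt_nonneg]

lemma Matrix.PosSemidef.sqrt_mul_self {k : ℕ} {M : Matrix (Fin k) (Fin k) ℝ}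
    (hM : M.PosSemidef) : hM.sqrt * hM.sqrt = M := by
  conv_rhs => rw [hM.1.spectral_theorem]
  rw [Matrix.PosSemidef.sqrt, IsHermitian.cfc, ← map_mul, diagonal_mul_diagonal]
  congr 2
  funext i
  simp [Real.mul_self_sqrt (hM.eigenvalues_nonneg i)]

lemma trace_sqrt_eq {k : ℕ} {M : Matrix (Fin k) (Fin k) ℝ} (hM : M.PosSemidef) :
    hM.sqrt.trace = ∑ i, Real.sqrt (hM.1.eigenvalues i) := by
  rw [Matrix.PosSemidef.sqrt, IsHermitian.cfc, Unitary.conjStarAlgAut_apply, Matrix.trace_mul_cycle,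
    Unitary.coe_star_mul_self, one_mul,
    trace_diagonal]
  simp

lemma psd_quad_nonneg {k : ℕ} {M : Matrix (Fin k) (Fin k) ℝ} (hM : M.PosSemidef)
    (x : Fin k → ℝ) : 0 ≤ x ⬝ᵥ (M *ᵥ x) := by
  simpa using hM.dotProduct_mulVec_nonneg x

open scoped MatrixOrder Matrix.Norms.L2Operator in
lemma psd_trace_zero {k : ℕ} {M : Matrix (Fin k) (Fin k) ℝ} (hM : M.PosSemidef)
    (h : M.trace = 0) : M = 0 := by
  obtain ⟨C, rfl⟩ := CStarAlgebra.nonneg_iff_eq_star_mul_self.mp hM.nonneg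
  have h' : ∑ j, ∑ i, C i j * C i j = 0 := by
    simpa [Matrix.trace, Matrix.diag, Matrix.mul_apply, Matrix.conjTranspose_apply] using h
  have hC : C = 0 := by
    ext p q
    have h1 := (Finset.sum_eq_zero_iff_of_nonneg (fun j _ =>
      Finset.sum_nonneg fun i _ => mul_self_nonneg (C i j))).mp h' q (Finset.mem_univ q)
    have h2 := (Finset.sum_eq_zero_iff_of_nonneg (fun i _ =>
      mul_self_nonneg (C i q))).mp h1 p (Finset.mem_univ p)
    simpa using mul_self_eq_zero.mp h2
  simp [hC]

lemma sym_dot {k : ℕ} {M : Matrix (Fin k) (Fin k) ℝ} (hM : M.IsHermitian)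
    (v w : Fin k → ℝ) : v ⬝ᵥ (M *ᵥ w) = (M *ᵥ v) ⬝ᵥ w := by
  have hMT : Mᵀ = M := hM
  rw [dotProduct_mulVec, ← hMT, vecMul_transpose, hMT]

lemma psd_quad_eq_zero {k : ℕ} {M : Matrix (Fin k) (Fin k) ℝ} (hM : M.PosSemidef)
    {x : Fin k → ℝ} (h : x ⬝ᵥ (M *ᵥ x) = 0) : M *ᵥ x = 0 := by
  refine (hM.dotProduct_mulVec_zero_iff x).mp ?_
  simpa using h

lemma sqrt_mono {k : ℕ} {X Y : Matrix (Fin k) (Fin k) ℝ}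
    (hX : X.PosSemidef) (hY : Y.PosSemidef) (h : (X * X - Y * Y).PosSemidef) :
    (X - Y).PosSemidef := by
  have hD : (X - Y).IsHermitian := hX.1.sub hY.1
  apply hD.posSemidef_iff_eigenvalues_nonneg.mpr
  intro i
  by_contra hneg
  push_neg at hneg
  set μ : ℝ := hD.eigenvalues i with hμ
  set v : Fin k → ℝ := ⇑(hD.eigenvectorBasis i) with hv
  have hvne : v ≠ 0 := by
    intro h0
    apply hD.eigenvectorBasis.toBasis.ne_zero i
    ext j
    exact congrFun h0 j
  have heig : (X - Y) *ᵥ v = μ • v := hD.mulVec_eigenvectorBasis i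
  set l : ℝ := -μ with hl
  have hlpos : 0 < l := by simpa [hl] using hneg
  have heig' : (Y - X) *ᵥ v = l • v := by
    have : (Y - X) *ᵥ v = -((X - Y) *ᵥ v) := by
      rw [sub_mulVec, sub_mulVec]; abel
    rw [this, heig, hl, neg_smul]
  set q : ℝ := v ⬝ᵥ ((X + Y) *ᵥ v) with hq
  have h1 : v ⬝ᵥ ((X + Y) *ᵥ ((Y - X) *ᵥ v)) = l * q := by
    rw [heig', mulVec_smul, dotProduct_smul, smul_eq_mul]
  have h2 : v ⬝ᵥ ((Y - X) *ᵥ ((X + Y) *ᵥ v)) = l * q := by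
    rw [sym_dot (hY.1.sub hX.1), heig', smul_dotProduct, smul_eq_mul]
  have h3 : v ⬝ᵥ ((X + Y) *ᵥ ((Y - X) *ᵥ v)) + v ⬝ᵥ ((Y - X) *ᵥ ((X + Y) *ᵥ v))
      = (v ⬝ᵥ ((Y * Y) *ᵥ v) + v ⬝ᵥ ((Y * Y) *ᵥ v))
        - (v ⬝ᵥ ((X * X) *ᵥ v) + v ⬝ᵥ ((X * X) *ᵥ v)) := by
    rw [mulVec_mulVec, mulVec_mulVec, ← dotProduct_add, ← add_mulVec]
    have hid : (X + Y) * (Y - X) + (Y - X) * (X + Y)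
        = (Y * Y + Y * Y) - (X * X + X * X) := by noncomm_ring
    rw [hid, sub_mulVec, add_mulVec, add_mulVec, dotProduct_sub, dotProduct_add, dotProduct_add]
  have h4 : 0 ≤ v ⬝ᵥ ((X * X) *ᵥ v) - v ⬝ᵥ ((Y * Y) *ᵥ v) := by
    have := psd_quad_nonneg h v
    rwa [sub_mulVec, dotProduct_sub] at this
  have hqle : q ≤ 0 := by nlinarith
  have hXv : v ⬝ᵥ (X *ᵥ v) = 0 := by
    have hx := psd_quad_nonneg hX v
    have hy := psd_quad_nonneg hY v
    have : q = v ⬝ᵥ (X *ᵥ v) + v ⬝ᵥ (Y *ᵥ v) := by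
      rw [hq, add_mulVec, dotProduct_add]
    linarith [this ▸ hqle]
  have hYv : v ⬝ᵥ (Y *ᵥ v) = 0 := by
    have hx := psd_quad_nonneg hX v
    have hy := psd_quad_nonneg hY v
    have : q = v ⬝ᵥ (X *ᵥ v) + v ⬝ᵥ (Y *ᵥ v) := by
      rw [hq, add_mulVec, dotProduct_add]
    linarith [this ▸ hqle]
  have hXv0 : X *ᵥ v = 0 := psd_quad_eq_zero hX hXv
  have hYv0 : Y *ᵥ v = 0 := psd_quad_eq_zero hY hYv
  have : l • v = 0 := by rw [← heig', sub_mulVec, hXv0, hYv0, sub_zero]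
  rcases smul_eq_zero.mp this with h' | h'
  · exact absurd h' (ne_of_gt hlpos)
  · exact hvne h'
theorem stmt_9 {m n r : ℕ} (A : Matrix (Fin m) (Fin n) ℝ) (B : Matrix (Fin n) (Fin m) ℝ)
    (U : Matrix (Fin m) (Fin r) ℝ) (V : Matrix (Fin n) (Fin r) ℝ) (S : Matrix (Fin r) (Fin r) ℝ)
    (hU : Uᵀ * U = 1) (hV : Vᵀ * V = 1)
    (hS : ∃ d : Fin r → ℝ, S = Matrix.diagonal d ∧ ∀ i, 0 < d i)
    (hA : A = U * S * Vᵀ) (hB : IsMoorePenrose A B) :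
    B * A = V * Vᵀ ∧
    ∀ Z : Matrix (Fin n) (Fin n) ℝ, A = A * Z → nuclearNorm Z = A.rank → Z = B * A := by
  obtain ⟨d, hSd, hdpos⟩ := hS
  obtain ⟨hABA, hBAB, hABs, hBAs⟩ := hB
  set T : Matrix (Fin r) (Fin r) ℝ := Matrix.diagonal (fun i => (d i)⁻¹) with hT
  have hST : S * T = 1 := by
    rw [hSd, hT, diagonal_mul_diagonal]
    rw [show (fun i => d i * (d i)⁻¹) = fun _ : Fin r => (1 : ℝ) from
      funext fun i => mul_inv_cancel₀ (ne_of_gt (hdpos i))]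
    exact Matrix.diagonal_one
  have hTS : T * S = 1 := by
    rw [hSd, hT, diagonal_mul_diagonal]
    rw [show (fun i => (d i)⁻¹ * d i) = fun _ : Fin r => (1 : ℝ) from
      funext fun i => inv_mul_cancel₀ (ne_of_gt (hdpos i))]
    exact Matrix.diagonal_one
  -- the candidate pseudoinverse
  set C : Matrix (Fin n) (Fin m) ℝ := V * T * Uᵀ with hC
  have hCA : C * A = V * Vᵀ := by
    rw [hC, hA]
    calc V * T * Uᵀ * (U * S * Vᵀ) = V * T * (Uᵀ * U) * S * Vᵀ := by
          simp only [Matrix.mul_assoc]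
      _ = V * (T * S) * Vᵀ := by rw [hU]; simp only [Matrix.mul_assoc, Matrix.one_mul]
      _ = V * Vᵀ := by rw [hTS, Matrix.mul_one]
  have hACA : A * C * A = A := by
    rw [hC, hA]
    calc U * S * Vᵀ * (V * T * Uᵀ) * (U * S * Vᵀ)
        = U * S * (Vᵀ * V) * T * (Uᵀ * U) * S * Vᵀ := by simp only [Matrix.mul_assoc]
      _ = U * (S * T) * S * Vᵀ := by
          rw [hV, hU]; simp only [Matrix.mul_assoc, Matrix.one_mul]
      _ = U * S * Vᵀ := by rw [hST, Matrix.mul_one]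
  have hCAs : (C * A)ᵀ = C * A := by
    rw [hCA, Matrix.transpose_mul, Matrix.transpose_transpose]
  -- B * A = C * A
  have hBA : B * A = V * Vᵀ := by
    have key : B * A = C * A := by
      calc B * A = B * (A * C * A) := by rw [hACA]
        _ = (B * A) * (C * A) := by simp only [Matrix.mul_assoc]
        _ = (B * A)ᵀ * (C * A)ᵀ := by rw [hBAs, hCAs]
        _ = (Aᵀ * Bᵀ) * (Aᵀ * Cᵀ) := by rw [Matrix.transpose_mul B A, Matrix.transpose_mul C A]
        _ = Aᵀ * (A * B)ᵀ * Cᵀ := by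
            rw [Matrix.transpose_mul A B]; simp only [Matrix.mul_assoc]
        _ = Aᵀ * (A * B) * Cᵀ := by rw [hABs]
        _ = (A * B * A)ᵀ * Cᵀ := by rw [Matrix.transpose_mul (A * B) A, hABs]
        _ = Aᵀ * Cᵀ := by rw [hABA]
        _ = (C * A)ᵀ := by rw [Matrix.transpose_mul C A]
        _ = C * A := hCAs
    rw [key, hCA]
  refine ⟨hBA, ?_⟩
  -- rank A = r
  have hSunit : IsUnit S := by
    rw [Matrix.isUnit_iff_isUnit_det, hSd, Matrix.det_diagonal]
    exact isUnit_iff_ne_zero.mpr (Finset.prod_ne_zero_iff.mpr fun i _ => ne_of_gt (hdpos i))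
  have hrank : A.rank = r := by
    apply le_antisymm
    · calc A.rank ≤ (U * S).rank := by rw [hA]; exact Matrix.rank_mul_le_left (U * S) Vᵀ
        _ ≤ Fintype.card (Fin r) := Matrix.rank_le_card_width (U * S)
        _ = r := Fintype.card_fin r
    · have hS' : Uᵀ * (A * V) = S := by
        rw [hA]
        calc Uᵀ * (U * S * Vᵀ * V) = (Uᵀ * U) * S * (Vᵀ * V) := by simp only [Matrix.mul_assoc]
          _ = S := by rw [hU, hV, Matrix.one_mul, Matrix.mul_one]
      calc r = Fintype.card (Fin r) := (Fintype.card_fin r).symm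
        _ = S.rank := (Matrix.rank_of_isUnit S hSunit).symm
        _ = (Uᵀ * (A * V)).rank := by rw [hS']
        _ ≤ (A * V).rank := Matrix.rank_mul_le_right Uᵀ (A * V)
        _ ≤ A.rank := Matrix.rank_mul_le_left A V
  -- main uniqueness argument
  intro Z hAZ hnn
  have hUA : Uᵀ * A = S * Vᵀ := by
    rw [hA, ← Matrix.mul_assoc, ← Matrix.mul_assoc, hU, Matrix.one_mul]
  have hVZ : Vᵀ * Z = Vᵀ := by
    have h1 : S * (Vᵀ * Z) = S * Vᵀ := by
      rw [← Matrix.mul_assoc, ← hUA, Matrix.mul_assoc, ← hAZ]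
    calc Vᵀ * Z = (T * S) * (Vᵀ * Z) := by rw [hTS, Matrix.one_mul]
      _ = T * (S * Vᵀ) := by rw [Matrix.mul_assoc, h1]
      _ = (T * S) * Vᵀ := by rw [Matrix.mul_assoc]
      _ = Vᵀ := by rw [hTS, Matrix.one_mul]
  set P : Matrix (Fin n) (Fin n) ℝ := V * Vᵀ with hPdef
  have hPsym : Pᵀ = P := by rw [hPdef, Matrix.transpose_mul, Matrix.transpose_transpose]
  have hPP : P * P = P := by
    rw [hPdef]
    calc V * Vᵀ * (V * Vᵀ) = V * (Vᵀ * V) * Vᵀ := by simp only [Matrix.mul_assoc]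
      _ = V * Vᵀ := by rw [hV, Matrix.mul_one]
  have hPZ : P * Z = P := by
    rw [hPdef, Matrix.mul_assoc, hVZ]
  set W : Matrix (Fin n) (Fin n) ℝ := Z - P with hWdef
  have hZPW : Z = P + W := by rw [hWdef]; abel
  have hPW : P * W = 0 := by
    rw [hWdef, Matrix.mul_sub, hPZ, hPP, sub_self]
  have hWP : Wᵀ * P = 0 := by
    have : (Pᵀ * W)ᵀ = (0 : Matrix (Fin n) (Fin n) ℝ)ᵀ := by rw [hPsym, hPW]
    rwa [Matrix.transpose_mul, Matrix.transpose_transpose, Matrix.transpose_zero] at this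
  have hPWt : Pᵀ * W = 0 := by rw [hPsym, hPW]
  have hMdecomp : Zᵀ * Z = P + Wᵀ * W := by
    rw [hZPW, Matrix.transpose_add, Matrix.add_mul, Matrix.mul_add, Matrix.mul_add,
      hPWt, hWP, hPsym, hPP, add_zero, zero_add]
  have hZZ : (Zᵀ * Z).PosSemidef := Matrix.posSemidef_conjTranspose_mul_self Z
  have hWW : (Wᵀ * W).PosSemidef := Matrix.posSemidef_conjTranspose_mul_self W
  have hPpsd : P.PosSemidef := by
    have h0 : ((Vᵀ)ᴴ * Vᵀ).PosSemidef := Matrix.posSemidef_conjTranspose_mul_self Vᵀ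
    rwa [show (Vᵀ)ᴴ = V from Matrix.transpose_transpose V ▸ rfl] at h0
  set X : Matrix (Fin n) (Fin n) ℝ := hZZ.sqrt with hX
  have hXpsd : X.PosSemidef := hZZ.posSemidef_sqrt
  have hXX : X * X = Zᵀ * Z := hZZ.sqrt_mul_self
  have hmono : (X - P).PosSemidef := by
    apply sqrt_mono hXpsd hPpsd
    rw [hXX, hPP, hMdecomp, add_sub_cancel_left]
    exact hWW
  have htraceX : X.trace = nuclearNorm Z := by
    rw [hX, trace_sqrt_eq]
    rfl
  have htraceP : P.trace = (r : ℝ) := by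
    rw [hPdef, Matrix.trace_mul_comm, hV, Matrix.trace_one]
    simp
  have htr0 : (X - P).trace = 0 := by
    rw [Matrix.trace_sub, htraceX, htraceP, hnn, hrank]
    ring
  have hXP : X = P := by
    have := psd_trace_zero hmono htr0
    exact sub_eq_zero.mp this
  have hZZP : Zᵀ * Z = P := by rw [← hXX, hXP, hPP]
  have hWW0 : Wᵀ * W = 0 := by
    have h0 := hMdecomp
    rw [hZZP] at h0
    exact (left_eq_add.mp h0)
  have hW0 : W = 0 := by
    have : Wᴴ * W = 0 := hWW0
    exact Matrix.conjTranspose_mul_self_eq_zero.mp this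
  rw [hBA, hZPW, hW0, add_zero]
end

section
/- The minimum of rank(Z) + rank(L) over all (Z, L) satisfying A = AZ + LA equals rank(A), attained for instance by Z = A†A, L = 0. -/
open Matrix

lemma rank_add_le' {m n : ℕ} (X Y : Matrix (Fin m) (Fin n) ℝ) :
    (X + Y).rank ≤ X.rank + Y.rank := by
  simp only [Matrix.rank]
  have h : LinearMap.range (X + Y).mulVecLin ≤
      LinearMap.range X.mulVecLin ⊔ LinearMap.range Y.mulVecLin := by
    rintro _ ⟨v, rfl⟩
    rw [Matrix.mulVecLin_apply, Matrix.add_mulVec]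
    exact Submodule.add_mem_sup (LinearMap.mem_range_self _ v) (LinearMap.mem_range_self _ v)
  calc Module.finrank ℝ (LinearMap.range (X + Y).mulVecLin)
      ≤ Module.finrank ℝ ↥(LinearMap.range X.mulVecLin ⊔ LinearMap.range Y.mulVecLin) :=
        Submodule.finrank_mono h
    _ ≤ _ := Submodule.finrank_add_le_finrank_add_finrank _ _

theorem stmt_12 {m n : ℕ} (A : Matrix (Fin m) (Fin n) ℝ) (B : Matrix (Fin n) (Fin m) ℝ)
    (hB : IsMoorePenrose A B) :
    (∀ (Z : Matrix (Fin n) (Fin n) ℝ) (L : Matrix (Fin m) (Fin m) ℝ),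
        A = A * Z + L * A → A.rank ≤ Z.rank + L.rank) ∧
    A = A * (B * A) + (0 : Matrix (Fin m) (Fin m) ℝ) * A ∧
    (B * A).rank + (0 : Matrix (Fin m) (Fin m) ℝ).rank = A.rank := by
  obtain ⟨h1, h2, h3, h4⟩ := hB
  refine ⟨fun Z L hZL => ?_, ?_, ?_⟩
  · calc A.rank = (A * Z + L * A).rank := by rw [← hZL]
      _ ≤ (A * Z).rank + (L * A).rank := rank_add_le' _ _
      _ ≤ Z.rank + L.rank :=
        add_le_add (Matrix.rank_mul_le_right _ _) (Matrix.rank_mul_le_left _ _)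
  · rw [Matrix.zero_mul, add_zero, ← Matrix.mul_assoc, h1]
  · rw [Matrix.rank_zero, add_zero]
    refine le_antisymm (Matrix.rank_mul_le_right _ _) ?_
    calc A.rank = (A * (B * A)).rank := by rw [← Matrix.mul_assoc, h1]
      _ ≤ (B * A).rank := Matrix.rank_mul_le_right _ _
end

section
/- For any (Z, L) satisfying A = AZ + LA, one has ‖Z‖_* + ‖L‖_* ≥ rank(A); hence the minimum objective value of min_{Z,L} ‖Z‖_* + ‖L‖_* subject to A = AZ + LA equals rank(A). -/
open Matrix

namespace Stmt14Aux

lemma dot_self_nonneg {p : ℕ} (x : Fin p → ℝ) : 0 ≤ x ⬝ᵥ x :=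
  Finset.sum_nonneg fun _ _ => mul_self_nonneg _

lemma dot_sum_smul {p : ℕ} {ι : Type*} (s : Finset ι) (c : ι → ℝ) (u : ι → Fin p → ℝ)
    (z : Fin p → ℝ) : z ⬝ᵥ (∑ j ∈ s, c j • u j) = ∑ j ∈ s, c j * (z ⬝ᵥ u j) := by
  simp only [dotProduct, Finset.sum_apply, Pi.smul_apply, smul_eq_mul, Finset.mul_sum]
  rw [Finset.sum_comm]
  exact Finset.sum_congr rfl fun j _ => Finset.sum_congr rfl fun b _ => by ring

lemma dot_pair {p q : ℕ} (M : Matrix (Fin p) (Fin q) ℝ) (x y : Fin q → ℝ) :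
    (M *ᵥ x) ⬝ᵥ (M *ᵥ y) = x ⬝ᵥ ((Mᴴ * M) *ᵥ y) := by
  rw [Matrix.conjTranspose_eq_transpose_of_trivial, ← mulVec_mulVec,
    dotProduct_mulVec x, vecMul_transpose]

lemma spec {p : ℕ} (H : Matrix (Fin p) (Fin p) ℝ) (hH : H.IsHermitian) :
    ∃ v : Fin p → (Fin p → ℝ),
      (∀ i j, v i ⬝ᵥ v j = if i = j then 1 else 0) ∧
      (∀ x : Fin p → ℝ, ∀ a, ∑ j, (v j ⬝ᵥ x) * v j a = x a) ∧
      (∀ a b, ∑ j, v j a * v j b = if a = b then 1 else 0) ∧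
      (∀ j, H *ᵥ v j = hH.eigenvalues j • v j) := by
  have key : ∀ c b : Fin p, ∑ j, (hH.eigenvectorBasis j) c * (hH.eigenvectorBasis j) b
      = if c = b then (1:ℝ) else 0 := by
    intro c b
    have h2 : (hH.eigenvectorUnitary : Matrix (Fin p) (Fin p) ℝ) *
        star (hH.eigenvectorUnitary : Matrix (Fin p) (Fin p) ℝ) = 1 :=
      Unitary.mul_star_self_of_mem hH.eigenvectorUnitary.prop
    have := congrFun (congrFun h2 c) b
    simp only [Matrix.star_eq_conjTranspose, Matrix.mul_apply, Matrix.conjTranspose_apply,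
      star_trivial, Matrix.one_apply, hH.eigenvectorUnitary_apply] at this
    simpa using this
  refine ⟨fun j => ⇑(hH.eigenvectorBasis j), ?_, ?_, key, fun j => hH.mulVec_eigenvectorBasis j⟩
  · intro i j
    have h1 : star (hH.eigenvectorUnitary : Matrix (Fin p) (Fin p) ℝ) *
        (hH.eigenvectorUnitary : Matrix (Fin p) (Fin p) ℝ) = 1 :=
      Unitary.star_mul_self_of_mem hH.eigenvectorUnitary.prop
    have := congrFun (congrFun h1 i) j
    simp only [Matrix.star_eq_conjTranspose, Matrix.mul_apply, Matrix.conjTranspose_apply,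
      star_trivial, Matrix.one_apply, hH.eigenvectorUnitary_apply] at this
    simpa [dotProduct] using this
  · intro x a
    calc ∑ j, ((fun j => ⇑(hH.eigenvectorBasis j)) j ⬝ᵥ x) * (hH.eigenvectorBasis j) a
        = ∑ j, ∑ b, (hH.eigenvectorBasis j) a * (hH.eigenvectorBasis j) b * x b := by
          simp [dotProduct, Finset.sum_mul]; congr 1; ext j; congr 1; ext b; ring
      _ = ∑ b, (∑ j, (hH.eigenvectorBasis j) a * (hH.eigenvectorBasis j) b) * x b := by
          rw [Finset.sum_comm]; simp [Finset.sum_mul]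
      _ = x a := by simp [key]

lemma bessel {p : ℕ} {ι : Type*} [DecidableEq ι] (s : Finset ι) (w : ι → Fin p → ℝ)
    (hw : ∀ i ∈ s, ∀ j ∈ s, w i ⬝ᵥ w j = if i = j then 1 else 0)
    (x : Fin p → ℝ) : ∑ i ∈ s, (x ⬝ᵥ w i) ^ 2 ≤ x ⬝ᵥ x := by
  set y := ∑ i ∈ s, (x ⬝ᵥ w i) • w i with hy
  have hdots : ∀ z : Fin p → ℝ, z ⬝ᵥ y = ∑ i ∈ s, (x ⬝ᵥ w i) * (z ⬝ᵥ w i) := by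
    intro z
    simp only [hy, dotProduct, Finset.sum_apply, Pi.smul_apply, smul_eq_mul,
      Finset.mul_sum]
    rw [Finset.sum_comm]
    refine Finset.sum_congr rfl fun i _ => ?_
    exact Finset.sum_congr rfl fun b _ => by ring
  have hxy : x ⬝ᵥ y = ∑ i ∈ s, (x ⬝ᵥ w i) ^ 2 := by
    rw [hdots]; exact Finset.sum_congr rfl fun i _ => by ring
  have hyy : y ⬝ᵥ y = ∑ i ∈ s, (x ⬝ᵥ w i) ^ 2 := by
    rw [hdots]
    refine Finset.sum_congr rfl fun i hi => ?_
    have hyw : y ⬝ᵥ w i = x ⬝ᵥ w i := by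
      rw [dotProduct_comm, hdots]
      rw [Finset.sum_eq_single i]
      · rw [hw i hi i hi]; simp
      · intro j hj hne
        rw [hw i hi j hj]
        simp [Ne.symm hne]
      · intro h; exact absurd hi h
    rw [hyw]; ring
  have h0 : 0 ≤ (x - y) ⬝ᵥ (x - y) := dot_self_nonneg _
  have hexp : (x - y) ⬝ᵥ (x - y) = x ⬝ᵥ x - 2 * (x ⬝ᵥ y) + y ⬝ᵥ y := by
    rw [sub_dotProduct, dotProduct_sub, dotProduct_sub, dotProduct_comm y x]; ring
  rw [hexp, hxy, hyy] at h0
  linarith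

lemma cs_sum {ι : Type*} (s : Finset ι) (a b : ι → ℝ) :
    ∑ i ∈ s, a i * b i ≤ Real.sqrt (∑ i ∈ s, a i ^ 2) * Real.sqrt (∑ i ∈ s, b i ^ 2) := by
  have h := Finset.sum_mul_sq_le_sq_mul_sq s a b
  calc ∑ i ∈ s, a i * b i ≤ |∑ i ∈ s, a i * b i| := le_abs_self _
    _ = Real.sqrt ((∑ i ∈ s, a i * b i) ^ 2) := (Real.sqrt_sq_eq_abs _).symm
    _ ≤ Real.sqrt ((∑ i ∈ s, a i ^ 2) * (∑ i ∈ s, b i ^ 2)) := Real.sqrt_le_sqrt h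
    _ = _ := Real.sqrt_mul (Finset.sum_nonneg fun i _ => sq_nonneg _) _

lemma trace_bound {p : ℕ} {ι : Type*} [DecidableEq ι] (M : Matrix (Fin p) (Fin p) ℝ)
    (s : Finset ι) (w : ι → Fin p → ℝ)
    (hw : ∀ i ∈ s, ∀ j ∈ s, w i ⬝ᵥ w j = if i = j then 1 else 0) :
    ∑ i ∈ s, w i ⬝ᵥ (M *ᵥ w i) ≤ nuclearNorm M := by
  classical
  have hM := Matrix.isHermitian_conjTranspose_mul_self M
  obtain ⟨q, hq_on, hq_comp, _hq_mat, hq_eig⟩ := spec (Mᴴ * M) hM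
  set μ := hM.eigenvalues with hμ
  have hμ0 : ∀ j, 0 ≤ μ j := fun j => Matrix.eigenvalues_conjTranspose_mul_self_nonneg M j
  have key : ∀ j, (M *ᵥ q j) ⬝ᵥ (M *ᵥ q j) = μ j := by
    intro j
    rw [dot_pair, hq_eig j, dotProduct_smul, hq_on j j]
    simp
  have expand : ∀ i, w i ⬝ᵥ (M *ᵥ w i) = ∑ j, (q j ⬝ᵥ w i) * (w i ⬝ᵥ (M *ᵥ q j)) := by
    intro i
    have hwi : w i = ∑ j, (q j ⬝ᵥ w i) • q j := by
      funext a
      rw [Finset.sum_apply]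
      simp only [Pi.smul_apply, smul_eq_mul]
      exact (hq_comp (w i) a).symm
    conv_lhs => rw [show M *ᵥ w i = ∑ j, (q j ⬝ᵥ w i) • (M *ᵥ q j) by
      conv_lhs => rw [hwi]
      rw [← Matrix.mulVecLin_apply, map_sum]
      exact Finset.sum_congr rfl fun j _ => by simp [Matrix.mulVecLin_apply]]
    rw [dot_sum_smul]
  calc ∑ i ∈ s, w i ⬝ᵥ (M *ᵥ w i)
      = ∑ j, ∑ i ∈ s, (q j ⬝ᵥ w i) * (w i ⬝ᵥ (M *ᵥ q j)) := by
        rw [Finset.sum_comm]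
        exact Finset.sum_congr rfl fun i _ => expand i
    _ ≤ ∑ j, Real.sqrt (μ j) := by
        refine Finset.sum_le_sum fun j _ => ?_
        by_cases hj : μ j = 0
        · have h0 : M *ᵥ q j = 0 := by
            have := key j
            rw [hj] at this
            exact dotProduct_self_eq_zero.mp this
          simp [h0, Real.sqrt_nonneg]
        · set τ := Real.sqrt (μ j) with hτ
          have hτpos : 0 < τ := Real.sqrt_pos.mpr (lt_of_le_of_ne (hμ0 j) (Ne.symm hj))
          set u := τ⁻¹ • (M *ᵥ q j) with hu
          have hMq : M *ᵥ q j = τ • u := by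
            rw [hu, smul_smul, mul_inv_cancel₀ (ne_of_gt hτpos), one_smul]
          have hτ2 : τ * τ = μ j := Real.mul_self_sqrt (hμ0 j)
          have huu : u ⬝ᵥ u = 1 := by
            rw [hu, smul_dotProduct, dotProduct_smul, key j, smul_eq_mul, smul_eq_mul,
              ← hτ2]
            field_simp
          have hstep : ∑ i ∈ s, (q j ⬝ᵥ w i) * (w i ⬝ᵥ (M *ᵥ q j))
              = τ * ∑ i ∈ s, (q j ⬝ᵥ w i) * (u ⬝ᵥ w i) := by
            rw [Finset.mul_sum]
            refine Finset.sum_congr rfl fun i _ => ?_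
            rw [hMq, dotProduct_smul, smul_eq_mul, dotProduct_comm (w i) u]
            ring
          rw [hstep]
          have hcs : ∑ i ∈ s, (q j ⬝ᵥ w i) * (u ⬝ᵥ w i) ≤ 1 := by
            have h1 : ∑ i ∈ s, (q j ⬝ᵥ w i) * (u ⬝ᵥ w i)
                ≤ Real.sqrt (∑ i ∈ s, (q j ⬝ᵥ w i) ^ 2) *
                  Real.sqrt (∑ i ∈ s, (u ⬝ᵥ w i) ^ 2) :=
              cs_sum s _ _
            have h2 : ∑ i ∈ s, (q j ⬝ᵥ w i) ^ 2 ≤ 1 := by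
              have := bessel s w hw (q j)
              rw [hq_on j j] at this
              simpa using this
            have h3 : ∑ i ∈ s, (u ⬝ᵥ w i) ^ 2 ≤ 1 := by
              have := bessel s w hw u
              rwa [huu] at this
            calc ∑ i ∈ s, (q j ⬝ᵥ w i) * (u ⬝ᵥ w i)
                ≤ Real.sqrt (∑ i ∈ s, (q j ⬝ᵥ w i) ^ 2) *
                  Real.sqrt (∑ i ∈ s, (u ⬝ᵥ w i) ^ 2) := h1
              _ ≤ Real.sqrt 1 * Real.sqrt 1 :=
                  mul_le_mul (Real.sqrt_le_sqrt h2) (Real.sqrt_le_sqrt h3)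
                    (Real.sqrt_nonneg _) (Real.sqrt_nonneg _)
              _ = 1 := by simp
          calc τ * ∑ i ∈ s, (q j ⬝ᵥ w i) * (u ⬝ᵥ w i) ≤ τ * 1 := by
                exact mul_le_mul_of_nonneg_left hcs (le_of_lt hτpos)
            _ = τ := mul_one τ
    _ = nuclearNorm M := rfl

end Stmt14Aux


theorem stmt_14 {m n : ℕ} (A : Matrix (Fin m) (Fin n) ℝ) :
    (∀ (Z : Matrix (Fin n) (Fin n) ℝ) (L : Matrix (Fin m) (Fin m) ℝ),
        A = A * Z + L * A → (A.rank : ℝ) ≤ nuclearNorm Z + nuclearNorm L) ∧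
    IsLeast {c : ℝ | ∃ (Z : Matrix (Fin n) (Fin n) ℝ) (L : Matrix (Fin m) (Fin m) ℝ),
        A = A * Z + L * A ∧ c = nuclearNorm Z + nuclearNorm L} (A.rank : ℝ) := by
  classical
  have hA := Matrix.isHermitian_conjTranspose_mul_self A
  obtain ⟨v, hv_on, hv_comp, hv_mat, hv_eig⟩ := Stmt14Aux.spec (Aᴴ * A) hA
  set lam := hA.eigenvalues with hlam
  set S : Finset (Fin n) := Finset.univ.filter (fun i => lam i ≠ 0) with hS
  have hlam0 : ∀ i, 0 ≤ lam i := fun i =>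
    Matrix.eigenvalues_conjTranspose_mul_self_nonneg A i
  have hrank : (A.rank : ℝ) = S.card := by
    have h1 : A.rank = (Aᴴ * A).rank := by
      rw [Matrix.conjTranspose_eq_transpose_of_trivial, Matrix.rank_transpose_mul_self]
    rw [h1, hA.rank_eq_card_non_zero_eigs]
    norm_cast
    rw [Fintype.card_subtype]
  have hAvdot : ∀ i j, (A *ᵥ v i) ⬝ᵥ (A *ᵥ v j) = lam j * (if i = j then 1 else 0) := by
    intro i j
    rw [Stmt14Aux.dot_pair, hv_eig j, dotProduct_smul, smul_eq_mul, hv_on i j]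
  have hAv0 : ∀ i, lam i = 0 → A *ᵥ v i = 0 := by
    intro i hi
    apply dotProduct_self_eq_zero.mp
    have := hAvdot i i
    simpa [hi] using this
  have part1 : ∀ (Z : Matrix (Fin n) (Fin n) ℝ) (L : Matrix (Fin m) (Fin m) ℝ),
      A = A * Z + L * A → (A.rank : ℝ) ≤ nuclearNorm Z + nuclearNorm L := by
    intro Z L hZL
    set σ : Fin n → ℝ := fun i => Real.sqrt (lam i) with hσ
    have hσpos : ∀ i ∈ S, 0 < σ i := by
      intro i hi
      rw [hS, Finset.mem_filter] at hi
      exact Real.sqrt_pos.mpr (lt_of_le_of_ne (hlam0 i) (Ne.symm hi.2))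
    have hσsq : ∀ i, σ i * σ i = lam i := fun i => Real.mul_self_sqrt (hlam0 i)
    set u : Fin n → Fin m → ℝ := fun i => (σ i)⁻¹ • (A *ᵥ v i) with hu
    have hAvu : ∀ i ∈ S, A *ᵥ v i = σ i • u i := by
      intro i hi
      rw [hu]; dsimp only
      rw [smul_smul, mul_inv_cancel₀ (hσpos i hi).ne', one_smul]
    have hu_on : ∀ i ∈ S, ∀ j ∈ S, u i ⬝ᵥ u j = if i = j then 1 else 0 := by
      intro i hi j hj
      rw [hu]; dsimp only
      rw [smul_dotProduct, dotProduct_smul, hAvdot i j, smul_eq_mul, smul_eq_mul]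
      by_cases hij : i = j
      · subst hij
        simp only [if_pos rfl, mul_one]
        rw [← hσsq i]
        have hne := (hσpos i hi).ne'
        field_simp
      · simp [hij]
    have hATu : ∀ i ∈ S, Aᵀ *ᵥ u i = σ i • v i := by
      intro i hi
      rw [hu]; dsimp only
      rw [mulVec_smul, mulVec_mulVec]
      have hAA : Aᵀ * A = Aᴴ * A := by
        rw [Matrix.conjTranspose_eq_transpose_of_trivial]
      rw [hAA, hv_eig i, smul_smul]
      congr 1
      rw [← hσsq i]
      have hne := (hσpos i hi).ne'
      field_simp
    have hone : ∀ i ∈ S, v i ⬝ᵥ (Z *ᵥ v i) + u i ⬝ᵥ (L *ᵥ u i) = 1 := by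
      intro i hi
      have happ : A *ᵥ v i = (A * Z) *ᵥ v i + (L * A) *ᵥ v i := by
        conv_lhs => rw [hZL]
        rw [Matrix.add_mulVec]
      have hdot := congrArg (fun x => u i ⬝ᵥ x) happ
      rw [dotProduct_add] at hdot
      have hL0 : u i ⬝ᵥ (A *ᵥ v i) = σ i := by
        rw [hAvu i hi, dotProduct_smul, hu_on i hi i hi]
        simp
      have h1 : u i ⬝ᵥ ((A * Z) *ᵥ v i) = σ i * (v i ⬝ᵥ (Z *ᵥ v i)) := by
        rw [← mulVec_mulVec, dotProduct_mulVec, ← mulVec_transpose, hATu i hi,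
          smul_dotProduct, smul_eq_mul]
      have h2 : u i ⬝ᵥ ((L * A) *ᵥ v i) = σ i * (u i ⬝ᵥ (L *ᵥ u i)) := by
        rw [← mulVec_mulVec, hAvu i hi, mulVec_smul, dotProduct_smul, smul_eq_mul]
      rw [hL0, h1, h2] at hdot
      have hmul : σ i * (v i ⬝ᵥ (Z *ᵥ v i) + u i ⬝ᵥ (L *ᵥ u i)) = σ i * 1 := by
        rw [mul_add, mul_one]
        linarith
      exact mul_left_cancel₀ (hσpos i hi).ne' hmul
    have hsum : ∑ i ∈ S, (v i ⬝ᵥ (Z *ᵥ v i) + u i ⬝ᵥ (L *ᵥ u i)) = (S.card : ℝ) := by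
      rw [Finset.sum_congr rfl hone]
      simp
    rw [hrank]
    calc (S.card : ℝ)
        = (∑ i ∈ S, v i ⬝ᵥ (Z *ᵥ v i)) + ∑ i ∈ S, u i ⬝ᵥ (L *ᵥ u i) := by
          rw [← Finset.sum_add_distrib, hsum]
      _ ≤ nuclearNorm Z + nuclearNorm L :=
          add_le_add (Stmt14Aux.trace_bound Z S v (fun i _ j _ => hv_on i j))
            (Stmt14Aux.trace_bound L S u hu_on)
  set Z₀ : Matrix (Fin n) (Fin n) ℝ := Matrix.of (fun a b => ∑ i ∈ S, v i a * v i b)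
    with hZ₀
  have hZ₀ab : ∀ a b, Z₀ a b = ∑ i ∈ S, v i a * v i b := fun a b => rfl
  have hAv_row : ∀ i a, (A *ᵥ v i) a = ∑ c, A a c * v i c := fun i a => rfl
  have hAZ₀ : A * Z₀ = A := by
    ext a b
    rw [Matrix.mul_apply]
    calc ∑ c, A a c * Z₀ c b
        = ∑ c, ∑ i ∈ S, A a c * (v i c * v i b) := by
          refine Finset.sum_congr rfl fun c _ => ?_
          rw [hZ₀ab, Finset.mul_sum]
      _ = ∑ i ∈ S, (A *ᵥ v i) a * v i b := by
          rw [Finset.sum_comm]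
          refine Finset.sum_congr rfl fun i _ => ?_
          rw [hAv_row, Finset.sum_mul]
          exact Finset.sum_congr rfl fun c _ => by ring
      _ = ∑ i, (A *ᵥ v i) a * v i b := by
          refine Finset.sum_subset (Finset.subset_univ S) ?_
          intro i _ hiS
          have hzero : lam i = 0 := by
            by_contra hne
            exact hiS (by rw [hS]; exact Finset.mem_filter.mpr ⟨Finset.mem_univ i, hne⟩)
          rw [hAv0 i hzero]
          simp
      _ = A a b := by
          have hc := hv_comp (fun c => A a c) b
          rw [← hc]
          refine Finset.sum_congr rfl fun i _ => ?_
          congr 1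
          rw [hAv_row]
          simp only [dotProduct]
          exact Finset.sum_congr rfl fun c _ => by ring
  have hZ₀symm : Z₀ᴴ = Z₀ := by
    ext a b
    simp only [Matrix.conjTranspose_apply, star_trivial, hZ₀ab]
    exact Finset.sum_congr rfl fun i _ => by ring
  have hZ₀idem : Z₀ * Z₀ = Z₀ := by
    ext a b
    rw [Matrix.mul_apply, hZ₀ab]
    calc ∑ c, Z₀ a c * Z₀ c b
        = ∑ c, ∑ i ∈ S, ∑ j ∈ S, (v i a * v j b) * (v i c * v j c) := by
          refine Finset.sum_congr rfl fun c _ => ?_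
          rw [hZ₀ab, hZ₀ab, Finset.sum_mul]
          refine Finset.sum_congr rfl fun i _ => ?_
          rw [Finset.mul_sum]
          exact Finset.sum_congr rfl fun j _ => by ring
      _ = ∑ i ∈ S, ∑ j ∈ S, (v i a * v j b) * (v i ⬝ᵥ v j) := by
          rw [Finset.sum_comm]
          refine Finset.sum_congr rfl fun i _ => ?_
          rw [Finset.sum_comm]
          refine Finset.sum_congr rfl fun j _ => ?_
          rw [← Finset.mul_sum]
          rfl
      _ = ∑ i ∈ S, v i a * v i b := by
          refine Finset.sum_congr rfl fun i hi => ?_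
          rw [Finset.sum_eq_single i]
          · rw [hv_on i i]; simp
          · intro j hj hne
            rw [hv_on i j]
            simp [Ne.symm hne]
          · intro h; exact absurd hi h
  have hH0 : Z₀ᴴ * Z₀ = Z₀ := by rw [hZ₀symm, hZ₀idem]
  have hZH := Matrix.isHermitian_conjTranspose_mul_self Z₀
  obtain ⟨qq, hq_on, hq_comp, hq_mat, hq_eig⟩ := Stmt14Aux.spec (Z₀ᴴ * Z₀) hZH
  set μ := hZH.eigenvalues with hμ
  have hq_ne : ∀ j, qq j ⬝ᵥ qq j = 1 := by
    intro j; rw [hq_on j j]; simp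
  have hμ01 : ∀ j, μ j = 0 ∨ μ j = 1 := by
    intro j
    have h2 : (Z₀ᴴ * Z₀) *ᵥ ((Z₀ᴴ * Z₀) *ᵥ qq j) = (μ j * μ j) • qq j := by
      rw [hq_eig j, mulVec_smul, hq_eig j, smul_smul]
    have h3 : (Z₀ᴴ * Z₀) *ᵥ ((Z₀ᴴ * Z₀) *ᵥ qq j) = μ j • qq j := by
      rw [mulVec_mulVec, hH0, hZ₀idem, ← hH0, hq_eig j]
    have h4 : (μ j * μ j - μ j) • qq j = 0 := by
      rw [sub_smul, h2.symm.trans h3, sub_self]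
    rcases smul_eq_zero.mp h4 with h5 | h5
    · have h6 : μ j * (μ j - 1) = 0 := by linear_combination h5
      rcases mul_eq_zero.mp h6 with h7 | h7
      · exact Or.inl h7
      · exact Or.inr (by linarith)
    · exfalso
      have h8 := hq_ne j
      rw [h5] at h8
      simp at h8
  have htr : ∑ j, μ j = (S.card : ℝ) := by
    calc ∑ j, μ j
        = ∑ j, qq j ⬝ᵥ ((Z₀ᴴ * Z₀) *ᵥ qq j) := by
          refine Finset.sum_congr rfl fun j _ => ?_
          rw [hq_eig j, dotProduct_smul, hq_ne j, smul_eq_mul, mul_one]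
      _ = ∑ j, ∑ a, ∑ b, Z₀ a b * (qq j a * qq j b) := by
          refine Finset.sum_congr rfl fun j _ => ?_
          rw [hH0]
          simp only [dotProduct, Matrix.mulVec]
          refine Finset.sum_congr rfl fun a _ => ?_
          rw [Finset.mul_sum]
          exact Finset.sum_congr rfl fun b _ => by ring
      _ = ∑ a, Z₀ a a := by
          rw [Finset.sum_comm]
          refine Finset.sum_congr rfl fun a _ => ?_
          rw [Finset.sum_comm]
          calc ∑ b, ∑ j, Z₀ a b * (qq j a * qq j b)
              = ∑ b, Z₀ a b * (if a = b then 1 else 0) := by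
                refine Finset.sum_congr rfl fun b _ => ?_
                rw [← Finset.mul_sum]
                congr 1
                exact hq_mat a b
            _ = Z₀ a a := by simp
      _ = (S.card : ℝ) := by
          calc ∑ a, Z₀ a a = ∑ a, ∑ i ∈ S, v i a * v i a :=
                Finset.sum_congr rfl fun a _ => hZ₀ab a a
            _ = ∑ i ∈ S, v i ⬝ᵥ v i := by
                rw [Finset.sum_comm]
                rfl
            _ = ∑ i ∈ S, (1 : ℝ) := by
                refine Finset.sum_congr rfl fun i _ => ?_
                rw [hv_on i i]; simp
            _ = (S.card : ℝ) := by simp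
  have hnnZ₀ : nuclearNorm Z₀ = (S.card : ℝ) := by
    have hdef : nuclearNorm Z₀ = ∑ j, Real.sqrt (μ j) := rfl
    rw [hdef, ← htr]
    refine Finset.sum_congr rfl fun j _ => ?_
    rcases hμ01 j with h | h
    · rw [h]; simp
    · rw [h]; simp
  have hnn0 : nuclearNorm (0 : Matrix (Fin m) (Fin m) ℝ) = 0 := by
    have h0 := Matrix.isHermitian_conjTranspose_mul_self (0 : Matrix (Fin m) (Fin m) ℝ)
    obtain ⟨r, hr_on, _, _, hr_eig⟩ := Stmt14Aux.spec _ h0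
    have hzz : (0 : Matrix (Fin m) (Fin m) ℝ)ᴴ * 0 = 0 := by simp
    have hz : ∀ j, h0.eigenvalues j = 0 := by
      intro j
      have hmv : ((0 : Matrix (Fin m) (Fin m) ℝ)ᴴ * 0) *ᵥ r j = 0 := by
        rw [hzz, Matrix.zero_mulVec]
      have heig : h0.eigenvalues j • r j = 0 := by
        rw [← hr_eig j, hmv]
      rcases smul_eq_zero.mp heig with h | h
      · exact h
      · exfalso
        have h1 := hr_on j j
        rw [h] at h1
        simp at h1
    have hdef : nuclearNorm (0 : Matrix (Fin m) (Fin m) ℝ)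
        = ∑ j, Real.sqrt (h0.eigenvalues j) := rfl
    rw [hdef]
    have hsq : ∀ j ∈ (Finset.univ : Finset (Fin m)), Real.sqrt (h0.eigenvalues j) = 0 :=
      fun j _ => by rw [hz j, Real.sqrt_zero]
    rw [Finset.sum_congr rfl hsq]
    simp
  refine ⟨part1, ⟨⟨Z₀, 0, ?_, ?_⟩, ?_⟩⟩
  · rw [hAZ₀, Matrix.zero_mul, add_zero]
  · rw [hnnZ₀, hnn0, add_zero, hrank]
  · rintro c ⟨Z, L, hZL, rfl⟩
    exact part1 Z L hZL
end

section
/- Suppose (A*, E*) minimizes rank(A) + λf(E) subject to X = A + E (original R-PCA with arbitrary noise function f). Then (Z*, E*) with Z* = (A*)†A* minimizes ‖Z‖_* + λf(E) subject to X − E = (X − E)Z (relaxed R-LRR). Conversely, if (Z*, E*) minimizes the relaxed R-LRR, then (X − E*, E*) minimizes the original R-PCA. -/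
open Matrix

lemma my_conjT {a b : ℕ} (M : Matrix (Fin a) (Fin b) ℝ) : Mᴴ = Mᵀ := by
  ext i j; simp [Matrix.conjTranspose_apply]

lemma my_inner_eq_dot {n : ℕ} (x y : EuclideanSpace ℝ (Fin n)) :
    @inner ℝ (EuclideanSpace ℝ (Fin n)) _ x y = x.ofLp ⬝ᵥ y.ofLp := by
  simp [PiLp.inner_apply, dotProduct, mul_comm]

lemma my_eig_congr {n : ℕ} {A B : Matrix (Fin n) (Fin n) ℝ} (h : A = B)
    (hA : A.IsHermitian) (hB : B.IsHermitian) : hA.eigenvalues = hB.eigenvalues := by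
  subst h; rfl

lemma my_ext_mulVec {m n : ℕ} {M N : Matrix (Fin m) (Fin n) ℝ}
    (h : ∀ x : Fin n → ℝ, M *ᵥ x = N *ᵥ x) : M = N := by
  ext i j
  have := congrFun (h (Pi.single j 1)) i
  simpa [Matrix.mulVec_single] using this

lemma my_basis_ext {n : ℕ} {M N : Matrix (Fin n) (Fin n) ℝ}
    (b : OrthonormalBasis (Fin n) ℝ (EuclideanSpace ℝ (Fin n)))
    (h : ∀ j, M *ᵥ ⇑(b j) = N *ᵥ ⇑(b j)) : M = N := by
  apply Matrix.toEuclideanLin.injective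
  apply Module.Basis.ext b.toBasis
  intro i
  simpa [Matrix.toEuclideanLin_apply] using congrArg (WithLp.equiv 2 (Fin n → ℝ)).symm (h i)

lemma my_sum_mulVec {m n : ℕ} {ι : Type*} (s : Finset ι) (M : ι → Matrix (Fin m) (Fin n) ℝ)
    (x : Fin n → ℝ) : (∑ i ∈ s, M i) *ᵥ x = ∑ i ∈ s, (M i *ᵥ x) := by
  ext j
  simp only [Matrix.mulVec, dotProduct, Finset.sum_apply, Finset.sum_mul]
  rw [Finset.sum_comm]
  exact Finset.sum_congr rfl fun k _ => by
    rw [Matrix.sum_apply, Finset.sum_mul]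

lemma my_vecMulVec_mulVec {n : ℕ} (v w x : Fin n → ℝ) :
    (vecMulVec v w) *ᵥ x = (w ⬝ᵥ x) • v := by
  ext i
  simp only [Matrix.mulVec, vecMulVec_apply, dotProduct, Pi.smul_apply, smul_eq_mul,
    Finset.sum_mul]
  exact Finset.sum_congr rfl (fun k _ => by ring)

lemma my_mul_vecMulVec {m n : ℕ} (M : Matrix (Fin m) (Fin n) ℝ) (v : Fin n → ℝ) (w : Fin n → ℝ) :
    M * vecMulVec v w = vecMulVec (M *ᵥ v) w := by
  ext i j
  simp [Matrix.mul_apply, vecMulVec_apply, Matrix.mulVec, dotProduct, Finset.sum_mul, mul_assoc]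

lemma my_nuclear_le_rank {n : ℕ} (P : Matrix (Fin n) (Fin n) ℝ) (hsym : Pᵀ = P)
    (hid : P * P = P) : nuclearNorm P ≤ (P.rank : ℝ) := by
  classical
  have hPH : P.IsHermitian := by rw [Matrix.IsHermitian, my_conjT]; exact hsym
  have hPP : Pᴴ * P = P := by rw [my_conjT, hsym, hid]
  have hEq : (isHermitian_conjTranspose_mul_self P).eigenvalues = hPH.eigenvalues :=
    my_eig_congr hPP _ _
  set ν := hPH.eigenvalues with hν
  set v : Fin n → Fin n → ℝ := fun i => ⇑(hPH.eigenvectorBasis i) with hv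
  have heig : ∀ i, P *ᵥ v i = ν i • v i := fun i => hPH.mulVec_eigenvectorBasis i
  have hvne : ∀ i, v i ≠ 0 := fun i => by
    intro h
    exact hPH.eigenvectorBasis.orthonormal.ne_zero i (by simpa [hv] using h)
  have h01 : ∀ i, ν i = 0 ∨ ν i = 1 := by
    intro i
    have h2 : P *ᵥ (P *ᵥ v i) = P *ᵥ v i := by rw [Matrix.mulVec_mulVec, hid]
    rw [heig i, Matrix.mulVec_smul, heig i] at h2
    have h3 : (ν i * ν i - ν i) • v i = 0 := by
      rw [sub_smul, mul_smul, h2, sub_self]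
    rcases smul_eq_zero.mp h3 with h4 | h4
    · have h5 : ν i * (ν i - 1) = 0 := by ring_nf; ring_nf at h4; linarith
      rcases mul_eq_zero.mp h5 with h6 | h6
      · exact Or.inl h6
      · exact Or.inr (by linarith)
    · exact absurd h4 (hvne i)
  have hnn : nuclearNorm P = ∑ i, ν i := by
    rw [nuclearNorm, hEq]
    refine Finset.sum_congr rfl fun i _ => ?_
    rcases h01 i with h | h <;> rw [h] <;> simp
  have hsum : ∑ i, ν i = (P.rank : ℝ) := by
    rw [hPH.rank_eq_card_non_zero_eigs, Fintype.card_subtype]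
    rw [← Finset.sum_filter_ne_zero Finset.univ]
    rw [Finset.sum_congr rfl (fun i hi => show ν i = 1 by
      rcases h01 i with h | h
      · exact absurd h (Finset.mem_filter.mp hi).2
      · exact h)]
    simp
    rfl
  rw [hnn, hsum]

lemma my_exists_proj {m n : ℕ} (A : Matrix (Fin m) (Fin n) ℝ) :
    ∃ P : Matrix (Fin n) (Fin n) ℝ, Pᵀ = P ∧ P * P = P ∧ A * P = A ∧ P.rank ≤ A.rank := by
  classical
  have hS := isHermitian_conjTranspose_mul_self A
  set μ := hS.eigenvalues with hμ
  set b := hS.eigenvectorBasis with hb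
  set v : Fin n → Fin n → ℝ := fun i => ⇑(b i) with hv
  have heig : ∀ i, (Aᴴ * A) *ᵥ v i = μ i • v i := fun i => hS.mulVec_eigenvectorBasis i
  have hortho : ∀ i j, v i ⬝ᵥ v j = if i = j then (1:ℝ) else 0 := by
    intro i j
    have h := orthonormal_iff_ite.mp b.orthonormal i j
    rw [my_inner_eq_dot] at h
    exact h
  have hSsym : (Aᴴ*A)ᵀ = Aᴴ*A := by
    rw [← my_conjT (Aᴴ*A)]
    exact hS.eq
  set T : Finset (Fin n) := Finset.univ.filter (fun i => μ i ≠ 0) with hT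
  set P : Matrix (Fin n) (Fin n) ℝ := ∑ i ∈ T, vecMulVec (v i) (v i) with hP
  have hPt : Pᵀ = P := by
    rw [hP, Matrix.transpose_sum]
    refine Finset.sum_congr rfl fun i _ => ?_
    ext a c
    simp [Matrix.transpose_apply, vecMulVec_apply, mul_comm]
  have hPb : ∀ j, P *ᵥ v j = if j ∈ T then v j else 0 := by
    intro j
    rw [hP, my_sum_mulVec]
    calc ∑ i ∈ T, (vecMulVec (v i) (v i)) *ᵥ v j
        = ∑ i ∈ T, (if i = j then v j else 0) := by
          refine Finset.sum_congr rfl fun i _ => ?_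
          rw [my_vecMulVec_mulVec, hortho i j]
          by_cases h : i = j
          · subst h; simp
          · simp [h]
      _ = if j ∈ T then v j else 0 := Finset.sum_ite_eq' T j (fun _ => v j)
  have hPP : P * P = P := by
    have hterm : ∀ i ∈ T, P * vecMulVec (v i) (v i) = vecMulVec (v i) (v i) := by
      intro i hi
      rw [my_mul_vecMulVec, hPb i, if_pos hi]
    calc P * P = P * ∑ i ∈ T, vecMulVec (v i) (v i) := by rw [← hP]
      _ = ∑ i ∈ T, P * vecMulVec (v i) (v i) := Finset.mul_sum T _ P
      _ = ∑ i ∈ T, vecMulVec (v i) (v i) := Finset.sum_congr rfl hterm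
      _ = P := hP.symm
  have hSP : (Aᴴ * A) * P = Aᴴ * A := by
    refine my_basis_ext b fun j => ?_
    show ((Aᴴ * A) * P) *ᵥ v j = (Aᴴ * A) *ᵥ v j
    rw [← Matrix.mulVec_mulVec, hPb j]
    by_cases h : j ∈ T
    · rw [if_pos h]
    · rw [if_neg h]
      have hμ0 : μ j = 0 := by
        by_contra hne
        exact h (by simp [hT, hne])
      rw [Matrix.mulVec_zero, heig j, hμ0, zero_smul]
  have hPS : P * (Aᴴ * A) = Aᴴ * A := by
    have h := congrArg Matrix.transpose hSP
    rwa [Matrix.transpose_mul, hPt, hSsym] at h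
  have hAP : A * P = A := by
    have hM : (A - A * P)ᴴ * (A - A * P) = 0 := by
      have hexp : (A - A * P)ᴴ * (A - A * P)
          = Aᴴ * A - Aᴴ * (A * P) - (P * Aᴴ * A - P * Aᴴ * (A * P)) := by
        rw [Matrix.conjTranspose_sub, Matrix.conjTranspose_mul, my_conjT P, hPt,
          Matrix.sub_mul, Matrix.mul_sub, Matrix.mul_sub]
      rw [hexp, ← Matrix.mul_assoc Aᴴ A P, hSP, ← Matrix.mul_assoc (P * Aᴴ) A P,
        Matrix.mul_assoc P Aᴴ A, hPS, hSP]
      simp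
    have h0 := Matrix.conjTranspose_mul_self_eq_zero.mp hM
    have : A - A * P = 0 := h0
    rw [sub_eq_zero] at this
    exact this.symm
  have hrank : P.rank ≤ A.rank := by
    have h1 : (Aᴴ * A).rank = A.rank := by
      rw [my_conjT]
      exact Matrix.rank_transpose_mul_self A
    have h2 : (Aᴴ * A).rank = T.card := by
      rw [hS.rank_eq_card_non_zero_eigs, Fintype.card_subtype]
    have h3 : P.rank ≤ T.card := by
      set w : {i // i ∈ T} → (Fin n → ℝ) := fun i => v i.1 with hw
      have hsub : LinearMap.range P.mulVecLin ≤ Submodule.span ℝ (Set.range w) := by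
        rintro z ⟨u, rfl⟩
        have hz : P.mulVecLin u = P *ᵥ u := rfl
        rw [hz, hP, my_sum_mulVec]
        apply Submodule.sum_mem
        intro i hi
        rw [my_vecMulVec_mulVec]
        refine Submodule.smul_mem _ _ (Submodule.subset_span ?_)
        exact ⟨⟨i, hi⟩, rfl⟩
      have hle1 : P.rank ≤ Module.finrank ℝ (Submodule.span ℝ (Set.range w)) :=
        Submodule.finrank_mono hsub
      have hle2 : Module.finrank ℝ (Submodule.span ℝ (Set.range w)) ≤ Fintype.card {i // i ∈ T} :=
        finrank_range_le_card w
      have hcard : Fintype.card {i // i ∈ T} = T.card := Fintype.card_coe T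
      omega
    omega
  exact ⟨P, hPt, hPP, hAP, hrank⟩

lemma my_dot_pos {n : ℕ} {x : Fin n → ℝ} (hx : x ≠ 0) : 0 < x ⬝ᵥ x := by
  obtain ⟨i, hi⟩ := Function.ne_iff.mp hx
  exact Finset.sum_pos' (fun j _ => mul_self_nonneg _)
    ⟨i, Finset.mem_univ _, mul_self_pos.mpr (by simpa using hi)⟩

lemma my_rank_le_nuclear {m n : ℕ} (A : Matrix (Fin m) (Fin n) ℝ) (Z : Matrix (Fin n) (Fin n) ℝ)
    (hAZ : A = A * Z) : (A.rank : ℝ) ≤ nuclearNorm Z := by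
  classical
  have hS := isHermitian_conjTranspose_mul_self Z
  set S : Matrix (Fin n) (Fin n) ℝ := Zᴴ * Z with hSdef
  have hSZ : S = Zᵀ * Z := by rw [hSdef, my_conjT]
  set μ : Fin n → ℝ := (isHermitian_conjTranspose_mul_self Z).eigenvalues with hμ
  set b := (isHermitian_conjTranspose_mul_self Z).eigenvectorBasis with hb
  have heig : ∀ i, S *ᵥ ⇑(b i) = μ i • ⇑(b i) :=
    fun i => (isHermitian_conjTranspose_mul_self Z).mulVec_eigenvectorBasis i
  have hSsymm : Sᵀ = S := by
    rw [← my_conjT S]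
    exact hS.eq
  set T : Finset (Fin n) := Finset.univ.filter (fun i => 1 ≤ μ i) with hT
  have hrank : A.rank ≤ T.card := by
    by_contra hlt
    push_neg at hlt
    set V : Submodule ℝ (Fin n → ℝ) := LinearMap.range Aᵀ.mulVecLin with hV
    have hVrank : A.rank = Module.finrank ℝ V := (Matrix.rank_transpose A).symm
    let ψ : (Fin n → ℝ) →ₗ[ℝ] ({ i // i ∈ T } → ℝ) :=
      { toFun := fun x i => dotProduct ⇑(b i.1) x
        map_add' := fun x y => by funext i; simp [dotProduct_add]
        map_smul' := fun c x => by funext i; simp [dotProduct_smul] }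
    let φ := ψ.comp V.subtype
    obtain ⟨y, hy⟩ : ∃ y : LinearMap.ker φ, y ≠ 0 := by
      have h1 := LinearMap.finrank_range_add_finrank_ker φ
      have h2 : Module.finrank ℝ (LinearMap.range φ) ≤ T.card := by
        calc Module.finrank ℝ (LinearMap.range φ)
            ≤ Module.finrank ℝ ({i // i ∈ T} → ℝ) := Submodule.finrank_le _
          _ = T.card := by simp [Module.finrank_fintype_fun_eq_card]
      have h3 : 0 < Module.finrank ℝ (LinearMap.ker φ) := by omega
      obtain ⟨y, y', hyy⟩ := (Module.finrank_pos_iff (R := ℝ) (M := LinearMap.ker φ)).mp h3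
      rcases eq_or_ne y 0 with rfl | h
      · exact ⟨y', Ne.symm hyy⟩
      · exact ⟨y, h⟩
    set x : Fin n → ℝ := ((y : V) : Fin n → ℝ) with hx
    have hx0 : x ≠ 0 := by
      intro h
      exact hy (Subtype.ext (Subtype.ext h))
    set c : Fin n → ℝ := fun i => b.repr (WithLp.toLp 2 x) i with hc
    have hcd : ∀ i, c i = dotProduct ⇑(b i) x := by
      intro i
      show b.repr (WithLp.toLp 2 x) i = _
      rw [OrthonormalBasis.repr_apply_apply, my_inner_eq_dot]
    have hφ : ∀ i, 1 ≤ μ i → c i = 0 := by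
      intro i hi
      have h0 := congrFun (LinearMap.mem_ker.mp y.2) ⟨i, by simp [hT, hi]⟩
      rw [hcd]
      exact h0
    have hZx : Zᵀ *ᵥ x = x := by
      obtain ⟨v, hv⟩ := (y : V).2
      have hxv : x = Aᵀ *ᵥ v := by rw [hx, ← hv]; rfl
      rw [hxv, Matrix.mulVec_mulVec, ← Matrix.transpose_mul, ← hAZ]
    have hParseval : ∀ u v : EuclideanSpace ℝ (Fin n),
        @inner ℝ (EuclideanSpace ℝ (Fin n)) _ u v = ∑ i, b.repr u i * b.repr v i := by
      intro u v
      have h' : @inner ℝ (EuclideanSpace ℝ (Fin n)) _ u v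
          = @inner ℝ (EuclideanSpace ℝ (Fin n)) _ (b.repr u) (b.repr v) :=
        (b.repr.inner_map_map u v).symm
      rw [h']
      simp only [PiLp.inner_apply, RCLike.inner_apply, starRingEnd_apply, star_trivial]
      exact Finset.sum_congr rfl fun i _ => mul_comm _ _
    have hxx : x ⬝ᵥ x = ∑ i, c i * c i := by
      have h := hParseval (WithLp.toLp 2 x) (WithLp.toLp 2 x)
      rw [my_inner_eq_dot] at h
      exact h
    have hcoef : ∀ i, b.repr (WithLp.toLp 2 (S *ᵥ x)) i = μ i * c i := by
      intro i
      rw [OrthonormalBasis.repr_apply_apply, my_inner_eq_dot, WithLp.ofLp_toLp]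
      rw [Matrix.dotProduct_mulVec]
      have hvm : ∀ v : Fin n → ℝ, v ᵥ* S = S *ᵥ v := by
        intro v
        conv_lhs => rw [← hSsymm]
        rw [Matrix.vecMul_transpose]
      rw [hvm]
      exact (congrArg (fun v => v ⬝ᵥ x) (heig i)).trans
        ((smul_dotProduct _ _ _).trans (congrArg (fun t => μ i • t) (hcd i).symm))
    have hSx : x ⬝ᵥ (S *ᵥ x) = ∑ i, μ i * (c i * c i) := by
      have h := hParseval (WithLp.toLp 2 x) (WithLp.toLp 2 (S *ᵥ x))
      rw [my_inner_eq_dot] at h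
      simp only [WithLp.ofLp_toLp] at h
      rw [h]
      exact Finset.sum_congr rfl fun i _ => by rw [hcoef]; ring
    have hmain : x ⬝ᵥ x ≤ x ⬝ᵥ (S *ᵥ x) := by
      have hfix : (Z *ᵥ x) ⬝ᵥ x = x ⬝ᵥ x := by
        have h1 : x ⬝ᵥ (Zᵀ *ᵥ x) = (Z *ᵥ x) ⬝ᵥ x := by
          rw [Matrix.dotProduct_mulVec, Matrix.vecMul_transpose]
        rw [← h1, hZx]
      have hCS := real_inner_mul_inner_self_le (F := EuclideanSpace ℝ (Fin n)) (WithLp.toLp 2 (Z *ᵥ x)) (WithLp.toLp 2 x)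
      rw [my_inner_eq_dot, my_inner_eq_dot, my_inner_eq_dot] at hCS
      simp only [WithLp.ofLp_toLp] at hCS
      have hzz : (Z *ᵥ x) ⬝ᵥ (Z *ᵥ x) = x ⬝ᵥ (S *ᵥ x) := by
        rw [hSZ, ← Matrix.mulVec_mulVec]
        conv_rhs => rw [Matrix.dotProduct_mulVec, Matrix.vecMul_transpose]
      have hpos : 0 < x ⬝ᵥ x := my_dot_pos hx0
      rw [hfix, hzz] at hCS
      nlinarith [hpos, hCS]
    have hne : ∃ i, c i ≠ 0 := by
      by_contra hall
      push_neg at hall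
      apply hx0
      have hzero : b.repr (WithLp.toLp 2 x) = 0 := by ext i; exact hall i
      simpa using congrArg WithLp.ofLp (b.repr.map_eq_zero_iff.mp hzero)
    obtain ⟨i0, hi0⟩ := hne
    have hμi0 : μ i0 < 1 := by
      by_contra h
      push_neg at h
      exact hi0 (hφ i0 h)
    have hlt2 : ∑ i, μ i * (c i * c i) < ∑ i, c i * c i := by
      apply Finset.sum_lt_sum
      · intro i _
        by_cases h : 1 ≤ μ i
        · rw [hφ i h]; simp
        · push_neg at h
          nlinarith [mul_self_nonneg (c i)]
      · exact ⟨i0, Finset.mem_univ _, by nlinarith [mul_self_pos.mpr hi0]⟩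
    rw [hxx, hSx] at hmain
    linarith
  have h2 : (T.card : ℝ) ≤ nuclearNorm Z := by
    have hnn : nuclearNorm Z = ∑ i, Real.sqrt (μ i) := by rw [nuclearNorm, hμ]
    rw [hnn]
    calc (T.card : ℝ) = ∑ _i ∈ T, (1:ℝ) := by simp
      _ ≤ ∑ i ∈ T, Real.sqrt (μ i) := Finset.sum_le_sum (fun i hi => by
            rw [Real.one_le_sqrt]
            exact (Finset.mem_filter.mp hi).2)
      _ ≤ ∑ i, Real.sqrt (μ i) :=
            Finset.sum_le_sum_of_subset_of_nonneg (Finset.subset_univ T)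
              (fun i _ _ => Real.sqrt_nonneg _)
  calc (A.rank : ℝ) ≤ (T.card : ℝ) := by exact_mod_cast hrank
    _ ≤ nuclearNorm Z := h2


theorem stmt_15 {m n : ℕ} (X : Matrix (Fin m) (Fin n) ℝ) (lam : ℝ) (hlam : 0 < lam)
    (f : Matrix (Fin m) (Fin n) ℝ → ℝ) :
    (∀ (A E : Matrix (Fin m) (Fin n) ℝ) (B : Matrix (Fin n) (Fin m) ℝ),
      IsMoorePenrose A B → X = A + E →
      (∀ A' E' : Matrix (Fin m) (Fin n) ℝ, X = A' + E' →
        (A.rank : ℝ) + lam * f E ≤ (A'.rank : ℝ) + lam * f E') →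
      (X - E = (X - E) * (B * A) ∧
       ∀ (Z' : Matrix (Fin n) (Fin n) ℝ) (E' : Matrix (Fin m) (Fin n) ℝ),
         X - E' = (X - E') * Z' →
         nuclearNorm (B * A) + lam * f E ≤ nuclearNorm Z' + lam * f E')) ∧
    (∀ (Z : Matrix (Fin n) (Fin n) ℝ) (E : Matrix (Fin m) (Fin n) ℝ),
      X - E = (X - E) * Z →
      (∀ (Z' : Matrix (Fin n) (Fin n) ℝ) (E' : Matrix (Fin m) (Fin n) ℝ),
        X - E' = (X - E') * Z' →
        nuclearNorm Z + lam * f E ≤ nuclearNorm Z' + lam * f E') →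
      (X = (X - E) + E ∧
       ∀ A' E' : Matrix (Fin m) (Fin n) ℝ, X = A' + E' →
         ((X - E).rank : ℝ) + lam * f E ≤ (A'.rank : ℝ) + lam * f E')) := by
  constructor
  · rintro A E B ⟨h1, h2, h3, h4⟩ hXE hopt
    have hA : X - E = A := by rw [hXE, add_sub_cancel_right]
    constructor
    · rw [hA, ← Matrix.mul_assoc, h1]
    · intro Z' E' hZE'
      have hAE' : X = (X - E') + E' := (sub_add_cancel X E').symm
      have h5 := hopt (X - E') E' hAE'
      have h6 : ((X - E').rank : ℝ) ≤ nuclearNorm Z' := my_rank_le_nuclear _ _ hZE'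
      have hBA2 : (B * A) * (B * A) = B * A := by rw [← Matrix.mul_assoc, h2]
      have h7 : nuclearNorm (B * A) ≤ ((B * A).rank : ℝ) := my_nuclear_le_rank _ h4 hBA2
      have h8 : ((B * A).rank : ℝ) ≤ (A.rank : ℝ) := by
        exact_mod_cast Matrix.rank_mul_le_right B A
      linarith
  · rintro Z E hZE hopt
    refine ⟨(sub_add_cancel X E).symm, ?_⟩
    intro A' E' hXE'
    obtain ⟨P, hPt, hPP, hAP, hPrank⟩ := my_exists_proj A'
    have hA' : X - E' = A' := by rw [hXE', add_sub_cancel_right]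
    have hconstr : X - E' = (X - E') * P := by rw [hA']; exact hAP.symm
    have h5 := hopt P E' hconstr
    have h6 : ((X - E).rank : ℝ) ≤ nuclearNorm Z := my_rank_le_nuclear _ _ hZE
    have h7 : nuclearNorm P ≤ (P.rank : ℝ) := my_nuclear_le_rank _ hPt hPP
    have h8 : (P.rank : ℝ) ≤ (A'.rank : ℝ) := by exact_mod_cast hPrank
    linarith
end

section
/- Suppose (A*, E*) minimizes rank(A) + λf(E) subject to X = A + E. Then for any S with V_{A*}ᵀS = 0 (where A* = U*Σ*V*ᵀ is the skinny SVD), the pair ((A*)†A* + SV_{A*}ᵀ, E*) minimizes rank(Z) + λf(E) subject to X − E = (X − E)Z. Conversely, if (Z*, E*) minimizes the latter problem then (X − E*, E*) minimizes the former. -/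
open Matrix

/-- For any real matrix there is a square matrix `Z` with `A = A * Z` and `rank Z ≤ rank A`. -/
lemma exists_right_id {m n : ℕ} (A : Matrix (Fin m) (Fin n) ℝ) :
    ∃ Z : Matrix (Fin n) (Fin n) ℝ, A = A * Z ∧ Z.rank ≤ A.rank := by
  set W : Submodule ℝ (Fin n → ℝ) := LinearMap.range Aᵀ.mulVecLin with hWdef
  obtain ⟨W', hW⟩ := Submodule.exists_isCompl W
  set p : (Fin n → ℝ) →ₗ[ℝ] (Fin n → ℝ) :=
    W.subtype.comp (W.projectionOnto W' hW) with hpdef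
  have hpfix : ∀ x ∈ W, p x = x := by
    intro x hx
    simp [hpdef, Submodule.projectionOnto_apply_left hW ⟨x, hx⟩,
      Submodule.projection_apply_left hW ⟨x, hx⟩]
  refine ⟨(LinearMap.toMatrix' p)ᵀ, ?_, ?_⟩
  · have key : LinearMap.toMatrix' p * Aᵀ = Aᵀ := by
      apply Matrix.toLin'.injective
      rw [Matrix.toLin'_mul, Matrix.toLin'_toMatrix']
      refine LinearMap.ext fun v => ?_
      have hx : Matrix.toLin' Aᵀ v ∈ W := by
        rw [Matrix.toLin'_apply']
        exact LinearMap.mem_range_self _ v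
      simpa using hpfix _ hx
    have := congrArg Matrix.transpose key
    rwa [Matrix.transpose_mul, Matrix.transpose_transpose, eq_comm] at this
  · have h1 : ((LinearMap.toMatrix' p)ᵀ).rank = (LinearMap.toMatrix' p).rank :=
      Matrix.rank_transpose _
    rw [h1]
    have h2 : (LinearMap.toMatrix' p).rank ≤ Module.finrank ℝ W := by
      rw [Matrix.rank]
      have : (LinearMap.toMatrix' p).mulVecLin = p := by
        rw [← Matrix.toLin'_apply', Matrix.toLin'_toMatrix']
      rw [this]
      have hr : LinearMap.range p ≤ W := by
        rw [hpdef]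
        intro x hx
        obtain ⟨y, hy⟩ := hx
        simp only [LinearMap.comp_apply] at hy
        rw [← hy]
        exact Submodule.coe_mem _
      exact Submodule.finrank_mono hr
    have h3 : Module.finrank ℝ W = Aᵀ.rank := rfl
    rw [Matrix.rank_transpose] at h3
    omega

theorem stmt_16 {m n : ℕ} (X : Matrix (Fin m) (Fin n) ℝ) (lam : ℝ) (hlam : 0 < lam)
    (f : Matrix (Fin m) (Fin n) ℝ → ℝ) :
    (∀ (r : ℕ) (A E : Matrix (Fin m) (Fin n) ℝ) (B : Matrix (Fin n) (Fin m) ℝ)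
       (U : Matrix (Fin m) (Fin r) ℝ) (V : Matrix (Fin n) (Fin r) ℝ)
       (S : Matrix (Fin r) (Fin r) ℝ),
      Uᵀ * U = 1 → Vᵀ * V = 1 →
      (∃ d : Fin r → ℝ, S = Matrix.diagonal d ∧ ∀ i, 0 < d i) →
      A = U * S * Vᵀ → IsMoorePenrose A B → X = A + E →
      (∀ A' E' : Matrix (Fin m) (Fin n) ℝ, X = A' + E' →
        (A.rank : ℝ) + lam * f E ≤ (A'.rank : ℝ) + lam * f E') →
      ∀ T : Matrix (Fin n) (Fin r) ℝ, Vᵀ * T = 0 →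
      (X - E = (X - E) * (B * A + T * Vᵀ) ∧
       ∀ (Z' : Matrix (Fin n) (Fin n) ℝ) (E' : Matrix (Fin m) (Fin n) ℝ),
         X - E' = (X - E') * Z' →
         ((B * A + T * Vᵀ).rank : ℝ) + lam * f E ≤ (Z'.rank : ℝ) + lam * f E')) ∧
    (∀ (Z : Matrix (Fin n) (Fin n) ℝ) (E : Matrix (Fin m) (Fin n) ℝ),
      X - E = (X - E) * Z →
      (∀ (Z' : Matrix (Fin n) (Fin n) ℝ) (E' : Matrix (Fin m) (Fin n) ℝ),
        X - E' = (X - E') * Z' →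
        (Z.rank : ℝ) + lam * f E ≤ (Z'.rank : ℝ) + lam * f E') →
      (X = (X - E) + E ∧
       ∀ A' E' : Matrix (Fin m) (Fin n) ℝ, X = A' + E' →
         ((X - E).rank : ℝ) + lam * f E ≤ (A'.rank : ℝ) + lam * f E')) := by
  constructor
  · intro r A E B U V S hU hV hS hA hMP hX hopt T hT
    have hXE : X - E = A := by rw [hX]; abel
    -- A * T = 0
    have hAT : A * T = 0 := by
      rw [hA, Matrix.mul_assoc, Matrix.mul_assoc, hT, Matrix.mul_zero, Matrix.mul_zero]
    have hfix : A = A * (B * A + T * Vᵀ) := by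
      rw [Matrix.mul_add, ← Matrix.mul_assoc, ← Matrix.mul_assoc, hMP.1, hAT, Matrix.zero_mul, add_zero]
    -- rank (B*A + T*Vᵀ) ≤ r
    have hfact : B * A + T * Vᵀ = (B * (U * S) + T) * Vᵀ := by
      rw [Matrix.add_mul, hA]; simp only [Matrix.mul_assoc]
    have hrank1 : (B * A + T * Vᵀ).rank ≤ r := by
      rw [hfact]
      exact le_trans (Matrix.rank_mul_le_right _ _)
        (le_trans (Matrix.rank_le_card_height _) (by simp))
    -- r ≤ rank A
    obtain ⟨d, hd, hdpos⟩ := hS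
    have hSunit : IsUnit S := by
      rw [Matrix.isUnit_iff_isUnit_det, hd, Matrix.det_diagonal]
      exact isUnit_iff_ne_zero.mpr (Finset.prod_ne_zero_iff.mpr
        fun i _ => ne_of_gt (hdpos i))
    have hSA : S = Uᵀ * A * V := by
      rw [hA]
      rw [show Uᵀ * (U * S * Vᵀ) * V = (Uᵀ * U) * (S * (Vᵀ * V)) by
        simp only [Matrix.mul_assoc]]
      rw [hU, hV, Matrix.one_mul, Matrix.mul_one]
    have hrank2 : r ≤ A.rank := by
      have h1 : S.rank = r := by
        rw [Matrix.rank_of_isUnit S hSunit, Fintype.card_fin]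
      calc r = S.rank := h1.symm
        _ = (Uᵀ * A * V).rank := by rw [← hSA]
        _ ≤ (Uᵀ * A).rank := Matrix.rank_mul_le_left _ _
        _ ≤ A.rank := Matrix.rank_mul_le_right _ _
    refine ⟨by rw [hXE]; exact hfix, ?_⟩
    intro Z' E' hZ'
    have hsplit : X = (X - E') + E' := by abel
    have h4 : (X - E').rank ≤ Z'.rank := by
      rw [hZ']
      exact Matrix.rank_mul_le_right _ _
    have h5 := hopt (X - E') E' hsplit
    have h6 : ((B * A + T * Vᵀ).rank : ℝ) ≤ (A.rank : ℝ) := by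
      exact_mod_cast le_trans hrank1 hrank2
    have h7 : ((X - E').rank : ℝ) ≤ (Z'.rank : ℝ) := by exact_mod_cast h4
    linarith
  · intro Z E hZ hopt
    refine ⟨by abel, ?_⟩
    intro A' E' hX'
    have hA' : X - E' = A' := by rw [hX']; abel
    obtain ⟨Z', hZ'1, hZ'2⟩ := exists_right_id A'
    have hcon : X - E' = (X - E') * Z' := by rw [hA']; exact hZ'1
    have h1 := hopt Z' E' hcon
    have h2 : (X - E).rank ≤ Z.rank := by
      rw [hZ]; exact Matrix.rank_mul_le_right _ _
    have h3 : (Z'.rank : ℝ) ≤ (A'.rank : ℝ) := by exact_mod_cast hZ'2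
    have h4 : ((X - E).rank : ℝ) ≤ (Z.rank : ℝ) := by exact_mod_cast h2
    linarith
end
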